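/- arXiv:1304.1757 — 7 statements merged into one kernel-verified Lean document; each statement's English description precedes it below -/
import Mathlib

section
/- (Almost supermartingale convergence.) Let {v_k}, {u_k}, {a_k}, {b_k} be nonnegative random sequences such that E[v_{k+1} | F_k] ≤ (1+a_k)v_k − u_k + b_k for all k ≥ 0 with probability 1, where F_k is the σ-algebra generated by {(v_i,u_i,a_i,b_i) : 0 ≤ i ≤ k}. If Σ_{k=0}^∞ a_k < ∞ and Σ_{k=0}^∞ b_k < ∞ with probability 1, then with probability 1 the sequence {v_k} converges to a nonnegative random variable v, and Σ_{k=0}^∞ u_k < ∞. -/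
open MeasureTheory Filter

/-- **Almost supermartingale convergence (Robbins–Siegmund; Lemma 1).**
Let `v, u, a, b` be nonnegative random sequences with
`E[v_{k+1} | F_k] ≤ (1+a_k)v_k − u_k + b_k` a.s. for all `k`, where `F_k` is generated
by the history `{(v_i,u_i,a_i,b_i) : i ≤ k}`. If `∑ a_k < ∞` and `∑ b_k < ∞` a.s.,
then a.s. `v_k` converges to some nonnegative limit and `∑ u_k < ∞`. -/
theorem almost_supermartingale_convergence
    {Ω : Type*} [MeasurableSpace Ω] (μ : Measure Ω) [IsProbabilityMeasure μ]
    (v u a b : ℕ → Ω → ℝ)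
    (hv_meas : ∀ k, Measurable (v k)) (hu_meas : ∀ k, Measurable (u k))
    (ha_meas : ∀ k, Measurable (a k)) (hb_meas : ∀ k, Measurable (b k))
    (hv_int : ∀ k, Integrable (v k) μ)
    (F : ℕ → MeasurableSpace Ω)
    (hF : ∀ k, F k = MeasurableSpace.comap
      (fun ω => fun i : Fin (k+1) => (v i ω, u i ω, a i ω, b i ω)) inferInstance)
    (hnonneg : ∀ᵐ ω ∂μ, ∀ k, 0 ≤ v k ω ∧ 0 ≤ u k ω ∧ 0 ≤ a k ω ∧ 0 ≤ b k ω)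
    (hrec : ∀ k, ∀ᵐ ω ∂μ,
      (μ[v (k+1) | F k]) ω ≤ (1 + a k ω) * v k ω - u k ω + b k ω)
    (ha_sum : ∀ᵐ ω ∂μ, Summable (fun k => a k ω))
    (hb_sum : ∀ᵐ ω ∂μ, Summable (fun k => b k ω)) :
    ∀ᵐ ω ∂μ,
      (∃ c : ℝ, 0 ≤ c ∧ Tendsto (fun k => v k ω) atTop (nhds c)) ∧
      Summable (fun k => u k ω) := by
  classical
  -- the history maps
  have hmap : ∀ k, Measurable (fun ω => fun i : Fin (k+1) => (v i ω, u i ω, a i ω, b i ω)) := by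
    intro k
    exact measurable_pi_lambda _ fun i =>
      (hv_meas i).prodMk ((hu_meas i).prodMk ((ha_meas i).prodMk (hb_meas i)))
  have hFle : ∀ k, F k ≤ ‹MeasurableSpace Ω› := by
    intro k; rw [hF k]; exact (hmap k).comap_le
  have hFsucc : ∀ k, F k ≤ F (k+1) := by
    intro k
    rw [hF k, hF (k+1)]
    have hπ : Measurable (fun (x : Fin (k+2) → ℝ × ℝ × ℝ × ℝ) => fun i : Fin (k+1) => x i.castSucc) :=
      measurable_pi_lambda _ fun i => measurable_pi_apply _
    have hcomp : (fun ω => fun i : Fin (k+1) => (v i ω, u i ω, a i ω, b i ω))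
        = (fun (x : Fin (k+2) → ℝ × ℝ × ℝ × ℝ) => fun i : Fin (k+1) => x i.castSucc) ∘
          (fun ω => fun i : Fin (k+2) => (v i ω, u i ω, a i ω, b i ω)) := by
      funext ω; funext i; rfl
    rw [hcomp, ← MeasurableSpace.comap_comp]
    exact MeasurableSpace.comap_mono hπ.comap_le
  set ℱ : Filtration ℕ ‹MeasurableSpace Ω› :=
    ⟨F, monotone_nat_of_le_succ hFsucc, hFle⟩ with hℱdef
  have hℱ : ∀ k, ℱ k = F k := fun _ => rfl
  -- measurability of the coordinates with respect to F k
  have hcomap : ∀ k, Measurable[F k]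
      (fun ω => fun i : Fin (k+1) => (v i ω, u i ω, a i ω, b i ω)) := by
    intro k
    have : MeasurableSpace.comap
        (fun ω => fun i : Fin (k+1) => (v i ω, u i ω, a i ω, b i ω)) inferInstance ≤ F k :=
      (hF k).ge
    exact measurable_iff_comap_le.mpr this
  have hvF : ∀ k i, i ≤ k → Measurable[F k] (v i) := by
    intro k i hik
    exact (measurable_fst.comp
      ((measurable_pi_apply (⟨i, Nat.lt_succ_of_le hik⟩ : Fin (k+1))).comp (hcomap k)))
  have huF : ∀ k i, i ≤ k → Measurable[F k] (u i) := by
    intro k i hik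
    exact (measurable_fst.comp (measurable_snd.comp
      ((measurable_pi_apply (⟨i, Nat.lt_succ_of_le hik⟩ : Fin (k+1))).comp (hcomap k))))
  have haF : ∀ k i, i ≤ k → Measurable[F k] (a i) := by
    intro k i hik
    exact (measurable_fst.comp (measurable_snd.comp (measurable_snd.comp
      ((measurable_pi_apply (⟨i, Nat.lt_succ_of_le hik⟩ : Fin (k+1))).comp (hcomap k)))))
  have hbF : ∀ k i, i ≤ k → Measurable[F k] (b i) := by
    intro k i hik
    exact (measurable_snd.comp (measurable_snd.comp (measurable_snd.comp
      ((measurable_pi_apply (⟨i, Nat.lt_succ_of_le hik⟩ : Fin (k+1))).comp (hcomap k)))))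
  -- the product process and the transformed process
  set A : ℕ → Ω → ℝ := fun k ω => ∏ i ∈ Finset.range k, (1 + a i ω) with hAdef
  set Z : ℕ → Ω → ℝ := fun k ω =>
    v k ω / A k ω + ∑ i ∈ Finset.range k, (u i ω - b i ω) / A (i+1) ω with hZdef
  set D : ℕ → Ω → ℝ := fun k ω =>
    v (k+1) ω / A (k+1) ω - v k ω / A k ω + (u k ω - b k ω) / A (k+1) ω with hDdef
  have hZD : ∀ k ω, Z (k+1) ω = Z k ω + D k ω := by
    intro k ω
    simp only [hZdef, hDdef, Finset.sum_range_succ]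
    ring
  have hAsucc : ∀ k ω, A (k+1) ω = A k ω * (1 + a k ω) := by
    intro k ω; simp [hAdef, Finset.prod_range_succ]
  -- basic pointwise facts about A under nonnegativity
  have hA_one_le : ∀ ω, (∀ i, 0 ≤ a i ω) → ∀ m, 1 ≤ A m ω := by
    intro ω hω m
    simp only [hAdef]
    calc (1:ℝ) = ∏ _i ∈ Finset.range m, 1 := Finset.prod_const_one.symm
      _ ≤ ∏ i ∈ Finset.range m, (1 + a i ω) :=
        Finset.prod_le_prod (fun i _ => zero_le_one) (fun i _ => by linarith [hω i])
  have hA_pos : ∀ ω, (∀ i, 0 ≤ a i ω) → ∀ m, 0 < A m ω := by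
    intro ω hω m; linarith [hA_one_le ω hω m]
  -- main per-level claim
  have key : ∀ n : ℕ, ∀ᵐ ω ∂μ,
      (∀ j, (∑ l ∈ Finset.range (j+1), a l ω) ≤ n ∧ (∑ l ∈ Finset.range (j+1), b l ω) ≤ n) →
      ∃ c, Tendsto (fun k => Z k ω) atTop (nhds c) := by
    intro n
    set t : ℕ → Ω → Prop := fun j ω => ∀ i ≤ j,
      (∑ l ∈ Finset.range (i+1), a l ω) ≤ n ∧ (∑ l ∈ Finset.range (i+1), b l ω) ≤ n with htdef
    have ht_anti : ∀ ω ⦃j' j : ℕ⦄, j' ≤ j → t j ω → t j' ω := by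
      intro ω j' j hj h i hi; exact h i (hi.trans hj)
    set ind : ℕ → Ω → ℝ := fun j ω => if t j ω then 1 else 0 with hinddef
    have hind_nonneg : ∀ j ω, 0 ≤ ind j ω := by
      intro j ω
      simp only [hinddef]
      split <;> norm_num
    set X : ℕ → Ω → ℝ := fun k ω => v 0 ω + ∑ j ∈ Finset.range k, ind j ω * D j ω with hXdef
    -- bounds from the stopping condition
    have hta : ∀ ω, (∀ i, 0 ≤ a i ω) → ∀ j, t j ω → a j ω ≤ n := by
      intro ω hω j hj
      refine le_trans ?_ (hj j le_rfl).1
      exact Finset.single_le_sum (f := fun l => a l ω) (fun l _ => hω l)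
        (Finset.self_mem_range_succ j)
    have htb : ∀ ω, (∀ i, 0 ≤ b i ω) → ∀ j, t j ω → b j ω ≤ n := by
      intro ω hω j hj
      refine le_trans ?_ (hj j le_rfl).2
      exact Finset.single_le_sum (f := fun l => b l ω) (fun l _ => hω l)
        (Finset.self_mem_range_succ j)
    -- measurability with respect to F k
    have hAF : ∀ k j, j ≤ k + 1 → Measurable[F k] (fun ω => A j ω) := by
      intro k j hjk
      simp only [hAdef]
      exact Finset.measurable_prod _ fun i hi =>
        measurable_const.add (haF k i (by simp only [Finset.mem_range] at hi; omega))
    have htFset : ∀ k j, j ≤ k → MeasurableSet[F k] {ω | t j ω} := by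
      intro k j hjk
      have hrw : {ω | t j ω} = ⋂ i, ⋂ (_ : i ≤ j),
          ({ω | (∑ l ∈ Finset.range (i+1), a l ω) ≤ (n:ℝ)} ∩
            {ω | (∑ l ∈ Finset.range (i+1), b l ω) ≤ (n:ℝ)}) := by
        ext ω
        simp only [htdef, Set.mem_setOf_eq, Set.mem_iInter, Set.mem_inter_iff]
      rw [hrw]
      refine MeasurableSet.iInter fun i => MeasurableSet.iInter fun hij => ?_
      have hsa : Measurable[F k] (fun ω => ∑ l ∈ Finset.range (i+1), a l ω) :=
        Finset.measurable_sum _ fun l hl => haF k l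
          (by simp only [Finset.mem_range] at hl; omega)
      have hsb : Measurable[F k] (fun ω => ∑ l ∈ Finset.range (i+1), b l ω) :=
        Finset.measurable_sum _ fun l hl => hbF k l
          (by simp only [Finset.mem_range] at hl; omega)
      exact (measurableSet_le hsa measurable_const).inter
        (measurableSet_le hsb measurable_const)
    have hindF : ∀ k j, j ≤ k → Measurable[F k] (ind j) := by
      intro k j hjk
      exact Measurable.ite (htFset k j hjk) measurable_const measurable_const
    have hDF : ∀ k j, j + 1 ≤ k → Measurable[F k] (D j) := by
      intro k j hjk
      simp only [hDdef]
      exact (((hvF k (j+1) hjk).div (hAF k (j+1) (by omega))).sub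
        ((hvF k j (by omega)).div (hAF k j (by omega)))).add
        (((huF k j (by omega)).sub (hbF k j (by omega))).div (hAF k (j+1) (by omega)))
    have hXF : ∀ k, Measurable[F k] (X k) := by
      intro k
      simp only [hXdef]
      refine (hvF k 0 (Nat.zero_le k)).add ?_
      exact Finset.measurable_sum _ fun j hj =>
        (hindF k j (by simp only [Finset.mem_range] at hj; omega)).mul
        (hDF k j (by simp only [Finset.mem_range] at hj; omega))
    -- ambient measurability
    have hA_amb : ∀ m, Measurable (fun ω => A m ω) :=
      fun m => (hAF m m (by omega)).mono (hFle m) le_rfl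
    have hind_amb : ∀ j, Measurable (ind j) :=
      fun j => (hindF j j le_rfl).mono (hFle j) le_rfl
    have hX_amb : ∀ k, Measurable (X k) :=
      fun k => (hXF k).mono (hFle k) le_rfl
    -- integrability of the pieces
    have hIv' : ∀ j, Integrable (fun ω => ind j ω * (v (j+1) ω / A (j+1) ω)) μ := by
      intro j
      refine Integrable.mono' (hv_int (j+1))
        ((hind_amb j).mul ((hv_meas (j+1)).div (hA_amb (j+1)))).aestronglyMeasurable ?_
      filter_upwards [hnonneg] with ω hω
      have hA1 : 1 ≤ A (j+1) ω := hA_one_le ω (fun i => (hω i).2.2.1) (j+1)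
      by_cases h : t j ω
      · simp only [hinddef]
        rw [if_pos h, one_mul]
        rw [Real.norm_eq_abs, abs_of_nonneg (div_nonneg (hω (j+1)).1 (by linarith))]
        exact div_le_self (hω (j+1)).1 hA1
      · simp only [hinddef]
        rw [if_neg h, zero_mul, norm_zero]
        exact (hω (j+1)).1
    have hIv2 : ∀ j, Integrable (fun ω => ind j ω * (v j ω / A j ω)) μ := by
      intro j
      refine Integrable.mono' (hv_int j)
        ((hind_amb j).mul ((hv_meas j).div (hA_amb j))).aestronglyMeasurable ?_
      filter_upwards [hnonneg] with ω hω
      have hA1 : 1 ≤ A j ω := hA_one_le ω (fun i => (hω i).2.2.1) j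
      by_cases h : t j ω
      · simp only [hinddef]
        rw [if_pos h, one_mul]
        rw [Real.norm_eq_abs, abs_of_nonneg (div_nonneg (hω j).1 (by linarith))]
        exact div_le_self (hω j).1 hA1
      · simp only [hinddef]
        rw [if_neg h, zero_mul, norm_zero]
        exact (hω j).1
    have hIb : ∀ j, Integrable (fun ω => ind j ω * (b j ω / A (j+1) ω)) μ := by
      intro j
      refine Integrable.mono' (integrable_const ((n:ℝ)))
        ((hind_amb j).mul ((hb_meas j).div (hA_amb (j+1)))).aestronglyMeasurable ?_
      filter_upwards [hnonneg] with ω hω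
      have hA1 : 1 ≤ A (j+1) ω := hA_one_le ω (fun i => (hω i).2.2.1) (j+1)
      by_cases h : t j ω
      · simp only [hinddef]
        rw [if_pos h, one_mul]
        rw [Real.norm_eq_abs, abs_of_nonneg (div_nonneg (hω j).2.2.2 (by linarith))]
        exact le_trans (div_le_self (hω j).2.2.2 hA1) (htb ω (fun i => (hω i).2.2.2) j h)
      · simp only [hinddef]
        rw [if_neg h, zero_mul, norm_zero]
        exact Nat.cast_nonneg n
    have hIu : ∀ j, Integrable (fun ω => ind j ω * (u j ω / A (j+1) ω)) μ := by
      intro j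
      refine Integrable.mono'
        ((((hv_int j).const_mul ((1:ℝ)+n)).add
          ((integrable_const ((n:ℝ))).add
            (integrable_condExp (f := v (j+1)) (m := F j)).abs)))
        ((hind_amb j).mul ((hu_meas j).div (hA_amb (j+1)))).aestronglyMeasurable ?_
      filter_upwards [hnonneg, hrec j] with ω hω hr
      have hA1 : 1 ≤ A (j+1) ω := hA_one_le ω (fun i => (hω i).2.2.1) (j+1)
      have hv0 : 0 ≤ v j ω := (hω j).1
      have habs : 0 ≤ |(μ[v (j+1)|F j]) ω| := abs_nonneg _
      have hn0 : (0:ℝ) ≤ n := Nat.cast_nonneg n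
      by_cases h : t j ω
      · simp only [hinddef, Pi.add_apply]
        rw [if_pos h, one_mul,
          Real.norm_eq_abs, abs_of_nonneg (div_nonneg (hω j).2.1 (by linarith))]
        have h1 : u j ω / A (j+1) ω ≤ u j ω := div_le_self (hω j).2.1 hA1
        have h2 : u j ω ≤ (1 + a j ω) * v j ω + b j ω - (μ[v (j+1)|F j]) ω := by linarith [hr]
        have h3 : a j ω ≤ n := hta ω (fun i => (hω i).2.2.1) j h
        have h4 : b j ω ≤ n := htb ω (fun i => (hω i).2.2.2) j h
        have h5 : -(μ[v (j+1)|F j]) ω ≤ |(μ[v (j+1)|F j]) ω| := neg_le_abs _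
        nlinarith [mul_le_mul_of_nonneg_right h3 hv0]
      · simp only [hinddef, Pi.add_apply]
        rw [if_neg h, zero_mul, norm_zero]
        nlinarith [mul_nonneg (by linarith : (0:ℝ) ≤ 1 + (n:ℝ)) hv0]
    have hID : ∀ j, Integrable (fun ω => ind j ω * D j ω) μ := by
      intro j
      have hsplit : (fun ω => ind j ω * D j ω) = fun ω =>
          (ind j ω * (v (j+1) ω / A (j+1) ω) - ind j ω * (v j ω / A j ω)) +
          (ind j ω * (u j ω / A (j+1) ω) - ind j ω * (b j ω / A (j+1) ω)) := by
        funext ω; simp only [hDdef]; ring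
      rw [hsplit]
      exact ((hIv' j).sub (hIv2 j)).add ((hIu j).sub (hIb j))
    have hXint : ∀ k, Integrable (X k) μ := by
      intro k
      simp only [hXdef]
      exact (hv_int 0).add (integrable_finset_sum _ fun j _ => hID j)
    -- the supermartingale inequality
    have hsuper : ∀ k, (μ[X (k+1)|F k]) ≤ᵐ[μ] X k := by
      intro k
      set g : Ω → ℝ := fun ω => ind k ω * (A (k+1) ω)⁻¹ with hgdef
      set W : Ω → ℝ := fun ω => ind k ω * ((u k ω - b k ω) / A (k+1) ω - v k ω / A k ω)
        with hWdef
      have hgF : StronglyMeasurable[F k] g :=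
        ((hindF k k le_rfl).mul (hAF k (k+1) le_rfl).inv).stronglyMeasurable
      have hWF : StronglyMeasurable[F k] W := by
        refine ((hindF k k le_rfl).mul ?_).stronglyMeasurable
        exact (((huF k k le_rfl).sub (hbF k k le_rfl)).div (hAF k (k+1) le_rfl)).sub
          ((hvF k k le_rfl).div (hAF k k (by omega)))
      have hWint : Integrable W μ := by
        have hsplit : W = fun ω =>
            (ind k ω * (u k ω / A (k+1) ω) - ind k ω * (b k ω / A (k+1) ω)) -
            ind k ω * (v k ω / A k ω) := by
          funext ω; simp only [hWdef]; ring
        rw [hsplit]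
        exact ((hIu k).sub (hIb k)).sub (hIv2 k)
      have hgv_int : Integrable (g * v (k+1)) μ := by
        refine Integrable.mono' (hv_int (k+1))
          (((hind_amb k).mul (hA_amb (k+1)).inv).mul (hv_meas (k+1))).aestronglyMeasurable ?_
        filter_upwards [hnonneg] with ω hω
        have hA1 : 1 ≤ A (k+1) ω := hA_one_le ω (fun i => (hω i).2.2.1) (k+1)
        simp only [Pi.mul_apply, hgdef, hinddef]
        by_cases h : t k ω
        · rw [if_pos h, one_mul, Real.norm_eq_abs,
            abs_of_nonneg (mul_nonneg (inv_nonneg.mpr (by linarith)) (hω (k+1)).1),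
            inv_mul_eq_div]
          exact div_le_self (hω (k+1)).1 hA1
        · rw [if_neg h, zero_mul, zero_mul, norm_zero]
          exact (hω (k+1)).1
      have hXsm : StronglyMeasurable[F k] (X k) := (hXF k).stronglyMeasurable
      have hXsucc_eq : X (k+1) = X k + (g * v (k+1) + W) := by
        funext ω
        simp only [hXdef, Finset.sum_range_succ, Pi.add_apply, Pi.mul_apply, hgdef, hWdef,
          hDdef]
        ring
      have hce : μ[X (k+1)|F k] =ᵐ[μ] fun ω => X k ω + (g ω * (μ[v (k+1)|F k]) ω + W ω) := by
        rw [hXsucc_eq]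
        refine (condExp_add (hXint k) (hgv_int.add hWint) (F k)).trans ?_
        have h1 : μ[X k|F k] = X k := condExp_of_stronglyMeasurable (hFle k) hXsm (hXint k)
        have h2 : μ[g * v (k+1) + W|F k] =ᵐ[μ]
            fun ω => g ω * (μ[v (k+1)|F k]) ω + W ω := by
          refine (condExp_add hgv_int hWint (F k)).trans ?_
          have h3 : μ[g * v (k+1)|F k] =ᵐ[μ] g * μ[v (k+1)|F k] :=
            condExp_mul_of_stronglyMeasurable_left hgF hgv_int (hv_int (k+1))
          have h4 : μ[W|F k] = W := condExp_of_stronglyMeasurable (hFle k) hWF hWint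
          rw [h4]
          filter_upwards [h3] with ω hω
          simp only [Pi.add_apply, Pi.mul_apply] at *
          rw [hω]
        rw [h1]
        filter_upwards [h2] with ω hω
        simp only [Pi.add_apply]
        rw [hω]
      refine hce.le.trans ?_
      filter_upwards [hnonneg, hrec k] with ω hω hr
      have hkey0 : g ω * (μ[v (k+1)|F k]) ω + W ω ≤ 0 := by
        by_cases h : t k ω
        · have ha0 : ∀ i, 0 ≤ a i ω := fun i => (hω i).2.2.1
          have hApos : 0 < A k ω := hA_pos ω ha0 k
          have hA1pos : 0 < A (k+1) ω := hA_pos ω ha0 (k+1)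
          have hg : g ω = (A (k+1) ω)⁻¹ := by
            simp only [hgdef, hinddef]; rw [if_pos h, one_mul]
          have hw : W ω = (u k ω - b k ω) / A (k+1) ω - v k ω / A k ω := by
            simp only [hWdef, hinddef]; rw [if_pos h, one_mul]
          have hmul : g ω * (μ[v (k+1)|F k]) ω ≤
              (A (k+1) ω)⁻¹ * ((1 + a k ω) * v k ω - u k ω + b k ω) := by
            rw [hg]
            exact mul_le_mul_of_nonneg_left hr (inv_nonneg.mpr hA1pos.le)
          have heq : (A (k+1) ω)⁻¹ * ((1 + a k ω) * v k ω - u k ω + b k ω) +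
              ((u k ω - b k ω) / A (k+1) ω - v k ω / A k ω) = 0 := by
            have h2 : A k ω ≠ 0 := ne_of_gt hApos
            have h3 : (1:ℝ) + a k ω ≠ 0 := by have := ha0 k; intro hcon; linarith
            rw [hAsucc]
            field_simp
            ring
          rw [hw]
          linarith
        · have hg : g ω = 0 := by simp only [hgdef, hinddef]; rw [if_neg h, zero_mul]
          have hw : W ω = 0 := by simp only [hWdef, hinddef]; rw [if_neg h, zero_mul]
          rw [hg, hw]; norm_num
      linarith
    have hXsuper : Supermartingale X ℱ μ :=
      supermartingale_nat (fun k => (hXF k).stronglyMeasurable) hXint hsuper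
    -- the stopped index
    set mk : ℕ → Ω → ℕ :=
      fun k ω => Nat.rec 0 (fun j m => if t j ω then j + 1 else m) k with hmkdef
    have hmk_succ : ∀ k ω, mk (k+1) ω = if t k ω then k + 1 else mk k ω := fun k ω => rfl
    have hmk_of_t : ∀ k ω, t k ω → mk k ω = k := by
      intro k ω hk
      cases k with
      | zero => rfl
      | succ k => rw [hmk_succ, if_pos (ht_anti ω (Nat.le_succ k) hk)]
    have hmk_t : ∀ k ω j, j < mk k ω → t j ω := by
      intro k
      induction k with
      | zero => intro ω j hj; simp [hmkdef] at hj
      | succ k ih =>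
        intro ω j hj
        rw [hmk_succ] at hj
        by_cases h : t k ω
        · rw [if_pos h] at hj
          exact ht_anti ω (Nat.lt_succ_iff.mp hj) h
        · rw [if_neg h] at hj
          exact ih ω j hj
    have hXZ : ∀ k ω, X k ω = Z (mk k ω) ω := by
      intro k
      induction k with
      | zero =>
        intro ω
        show v 0 ω + _ = Z (mk 0 ω) ω
        simp [hXdef, hZdef, hmkdef, hAdef]
      | succ k ih =>
        intro ω
        by_cases h : t k ω
        · have hmk1 : mk (k+1) ω = k + 1 := by rw [hmk_succ, if_pos h]
          have hstep : X (k+1) ω = X k ω + D k ω := by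
            simp only [hXdef, Finset.sum_range_succ, hinddef]
            rw [if_pos h, one_mul]
            ring
          rw [hstep, ih, hmk_of_t k ω h, hmk1]
          exact (hZD k ω).symm
        · have hmk1 : mk (k+1) ω = mk k ω := by rw [hmk_succ, if_neg h]
          have hstep : X (k+1) ω = X k ω := by
            simp only [hXdef, Finset.sum_range_succ, hinddef]
            rw [if_neg h, zero_mul, add_zero]
          rw [hstep, ih, hmk1]
    -- lower bound
    have hlow : ∀ᵐ ω ∂μ, ∀ k, -(n:ℝ) ≤ X k ω := by
      filter_upwards [hnonneg] with ω hω k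
      rw [hXZ k ω]
      have ha0 : ∀ i, 0 ≤ a i ω := fun i => (hω i).2.2.1
      have hterm : ∀ i ∈ Finset.range (mk k ω), -(b i ω) ≤ (u i ω - b i ω) / A (i+1) ω := by
        intro i _
        have hA1 : 1 ≤ A (i+1) ω := hA_one_le ω ha0 (i+1)
        have hApos : 0 < A (i+1) ω := hA_pos ω ha0 (i+1)
        have hb0 : 0 ≤ b i ω := (hω i).2.2.2
        have hu0 : 0 ≤ u i ω := (hω i).2.1
        rw [le_div_iff₀ hApos]
        nlinarith
      have hsum : ∑ i ∈ Finset.range (mk k ω), -(b i ω) ≤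
          ∑ i ∈ Finset.range (mk k ω), (u i ω - b i ω) / A (i+1) ω :=
        Finset.sum_le_sum hterm
      have hbm : ∑ i ∈ Finset.range (mk k ω), b i ω ≤ (n:ℝ) := by
        rcases Nat.eq_zero_or_pos (mk k ω) with h0 | h0
        · rw [h0]; simpa using (Nat.cast_nonneg n : (0:ℝ) ≤ n)
        · obtain ⟨m', hm'⟩ := Nat.exists_eq_succ_of_ne_zero h0.ne'
          rw [hm']
          have hlt : m' < mk k ω := by omega
          exact ((hmk_t k ω m' hlt) m' le_rfl).2
      have hsneg : -∑ i ∈ Finset.range (mk k ω), b i ω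
          = ∑ i ∈ Finset.range (mk k ω), -(b i ω) := (Finset.sum_neg_distrib _).symm
      have hv0 : 0 ≤ v (mk k ω) ω / A (mk k ω) ω :=
        div_nonneg (hω (mk k ω)).1 (hA_pos ω ha0 (mk k ω)).le
      simp only [hZdef]
      linarith
    -- L¹ bound
    have hX0 : X 0 = v 0 := by funext ω; simp [hXdef]
    have hmean : ∀ k, ∫ ω, X k ω ∂μ ≤ ∫ ω, v 0 ω ∂μ := by
      intro k
      have h := hXsuper.setIntegral_le (Nat.zero_le k) (MeasurableSet.univ)
      rw [hX0] at h
      simpa [setIntegral_univ] using h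
    set R : NNReal := (∫ ω, v 0 ω ∂μ + 2*n).toNNReal with hRdef
    have hbdd : ∀ k, eLpNorm (X k) 1 μ ≤ (R : ENNReal) := by
      intro k
      have hn0 : (0:ℝ) ≤ n := Nat.cast_nonneg n
      have habs : ∀ᵐ ω ∂μ, ‖X k ω‖ ≤ X k ω + 2*n := by
        filter_upwards [hlow] with ω hω
        rw [Real.norm_eq_abs, abs_le]
        constructor
        · linarith [hω k]
        · linarith [hω k]
      have hint : ∫ ω, ‖X k ω‖ ∂μ ≤ ∫ ω, v 0 ω ∂μ + 2*n := by
        calc ∫ ω, ‖X k ω‖ ∂μ ≤ ∫ ω, (X k ω + 2*n) ∂μ :=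
              integral_mono_ae (hXint k).norm ((hXint k).add (integrable_const _)) habs
          _ = ∫ ω, X k ω ∂μ + 2*n := by
              rw [integral_add (hXint k) (integrable_const _), integral_const]
              simp
          _ ≤ ∫ ω, v 0 ω ∂μ + 2*n := by linarith [hmean k]
      have h1 : eLpNorm (X k) 1 μ = ENNReal.ofReal (∫ ω, ‖X k ω‖ ∂μ) := by
        rw [eLpNorm_one_eq_lintegral_enorm,
          ← ofReal_integral_norm_eq_lintegral_enorm (hXint k)]
      rw [h1]
      exact le_trans (ENNReal.ofReal_le_ofReal hint) (le_of_eq rfl)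
    have hbdd' : ∀ k, eLpNorm ((-X) k) 1 μ ≤ (R : ENNReal) := by
      intro k
      rw [show ((-X) k) = -(X k) from rfl, eLpNorm_neg]
      exact hbdd k
    have hconv := hXsuper.neg.exists_ae_tendsto_of_bdd hbdd'
    filter_upwards [hconv, hnonneg] with ω hc hω hG
    obtain ⟨c, hc⟩ := hc
    refine ⟨-c, ?_⟩
    have hXk : ∀ k, X k ω = Z k ω := by
      intro k
      rw [hXZ k ω, hmk_of_t k ω (fun i _ => hG i)]
    have htend : Tendsto (fun k => -((-X) k ω)) atTop (nhds (-c)) := hc.neg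
    refine htend.congr ?_
    intro k
    simp only [Pi.neg_apply, neg_neg]
    exact hXk k
  -- conclusion, pointwise
  filter_upwards [hnonneg, ha_sum, hb_sum, ae_all_iff.2 key] with ω hn ha hb hkey
  obtain ⟨na, hna⟩ := exists_nat_ge (∑' i, a i ω)
  obtain ⟨nb, hnb⟩ := exists_nat_ge (∑' i, b i ω)
  have ha0 : ∀ i, 0 ≤ a i ω := fun i => (hn i).2.2.1
  have hb0 : ∀ i, 0 ≤ b i ω := fun i => (hn i).2.2.2
  have hG : ∀ j, (∑ l ∈ Finset.range (j+1), a l ω) ≤ ((max na nb : ℕ):ℝ) ∧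
      (∑ l ∈ Finset.range (j+1), b l ω) ≤ ((max na nb : ℕ):ℝ) := by
    intro j
    constructor
    · refine le_trans (Summable.sum_le_tsum _ (fun i _ => ha0 i) ha) (le_trans hna ?_)
      exact_mod_cast Nat.le_max_left na nb
    · refine le_trans (Summable.sum_le_tsum _ (fun i _ => hb0 i) hb) (le_trans hnb ?_)
      exact_mod_cast Nat.le_max_right na nb
  obtain ⟨c₀, hZc⟩ := hkey (max na nb) hG
  -- convergence of the products
  have hAub : ∀ m, A m ω ≤ Real.exp (∑' i, a i ω) := by
    intro m
    have h1 : A m ω ≤ ∏ i ∈ Finset.range m, Real.exp (a i ω) := by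
      simp only [hAdef]
      refine Finset.prod_le_prod (fun i _ => by linarith [ha0 i]) (fun i _ => ?_)
      have := Real.add_one_le_exp (a i ω); linarith
    rw [← Real.exp_sum] at h1
    exact h1.trans (Real.exp_le_exp.mpr (Summable.sum_le_tsum _ (fun i _ => ha0 i) ha))
  have hAmono : Monotone (fun m => A m ω) := by
    refine monotone_nat_of_le_succ fun m => ?_
    have h1 := hA_pos ω ha0 m
    rw [hAsucc]
    nlinarith [ha0 m]
  have hAbdd : BddAbove (Set.range fun m => A m ω) :=
    ⟨Real.exp (∑' i, a i ω), by rintro x ⟨m, rfl⟩; exact hAub m⟩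
  have hAtend : Tendsto (fun m => A m ω) atTop (nhds (⨆ m, A m ω)) :=
    tendsto_atTop_ciSup hAmono hAbdd
  have hA1 : ∀ m, 1 ≤ A m ω := hA_one_le ω ha0
  have hApos : ∀ m, 0 < A m ω := hA_pos ω ha0
  -- summability of the normalized series
  have hbA : Summable (fun i => b i ω / A (i+1) ω) :=
    Summable.of_nonneg_of_le (fun i => div_nonneg (hb0 i) (hApos (i+1)).le)
      (fun i => div_le_self (hb0 i) (hA1 (i+1))) hb
  obtain ⟨M, hM⟩ := hZc.bddAbove_range
  have hZle : ∀ k, Z k ω ≤ M := fun k => hM (Set.mem_range_self k)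
  have hsplitsum : ∀ k, ∑ i ∈ Finset.range k, (u i ω - b i ω) / A (i+1) ω =
      ∑ i ∈ Finset.range k, u i ω / A (i+1) ω -
      ∑ i ∈ Finset.range k, b i ω / A (i+1) ω := by
    intro k
    rw [← Finset.sum_sub_distrib]
    exact Finset.sum_congr rfl fun i _ => sub_div _ _ _
  have huA : Summable (fun i => u i ω / A (i+1) ω) := by
    refine summable_of_sum_range_le (c := M + ∑' i, b i ω / A (i+1) ω)
      (fun i => div_nonneg (hn i).2.1 (hApos (i+1)).le) (fun k => ?_)
    have h1 : Z k ω = v k ω / A k ω + (∑ i ∈ Finset.range k, u i ω / A (i+1) ω -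
        ∑ i ∈ Finset.range k, b i ω / A (i+1) ω) := by
      simp only [hZdef]
      rw [hsplitsum k]
    have h2 : 0 ≤ v k ω / A k ω := div_nonneg (hn k).1 (hApos k).le
    have h3 : ∑ i ∈ Finset.range k, b i ω / A (i+1) ω ≤ ∑' i, b i ω / A (i+1) ω :=
      Summable.sum_le_tsum _ (fun i _ => div_nonneg (hb0 i) (hApos (i+1)).le) hbA
    show ∑ i ∈ Finset.range k, u i ω / A (i+1) ω ≤ M + ∑' i, b i ω / A (i+1) ω
    have h4 := hZle k
    rw [h1] at h4
    linarith
  have hubA : Summable (fun i => (u i ω - b i ω) / A (i+1) ω) :=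
    (huA.sub hbA).congr fun i => (sub_div _ _ _).symm
  have hpartial : Tendsto (fun k => ∑ i ∈ Finset.range k, (u i ω - b i ω) / A (i+1) ω)
      atTop (nhds (∑' i, (u i ω - b i ω) / A (i+1) ω)) := hubA.hasSum.tendsto_sum_nat
  have hvA : Tendsto (fun k => v k ω / A k ω) atTop
      (nhds (c₀ - ∑' i, (u i ω - b i ω) / A (i+1) ω)) := by
    refine Tendsto.congr (f₁ := fun k =>
      Z k ω - ∑ i ∈ Finset.range k, (u i ω - b i ω) / A (i+1) ω) ?_ (hZc.sub hpartial)
    intro k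
    simp only [hZdef]
    ring
  have hvtend : Tendsto (fun k => v k ω) atTop
      (nhds ((c₀ - ∑' i, (u i ω - b i ω) / A (i+1) ω) * (⨆ m, A m ω))) := by
    refine Tendsto.congr ?_ (hvA.mul hAtend)
    intro k
    exact div_mul_cancel₀ _ (hApos k).ne'
  constructor
  · exact ⟨_, ge_of_tendsto' hvtend fun k => (hn k).1, hvtend⟩
  · refine Summable.of_nonneg_of_le (fun k => (hn k).2.1) (fun k => ?_)
      (huA.mul_right (Real.exp (∑' i, a i ω)))
    have h2 : u k ω / A (k+1) ω * A (k+1) ω ≤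
        u k ω / A (k+1) ω * Real.exp (∑' i, a i ω) :=
      mul_le_mul_of_nonneg_left (hAub (k+1)) (div_nonneg (hn k).2.1 (hApos (k+1)).le)
    rw [div_mul_cancel₀ _ (hApos (k+1)).ne'] at h2
    exact h2
end

section
/- (Projected gradient step inequality, convex case.) Let Y ⊆ ℝ^d be a closed convex set, let φ:ℝ^d→ℝ be convex and differentiable with L-Lipschitz gradient on ℝ^d, let α > 0, x ∈ ℝ^d, and y = Π_Y[x − α∇φ(x)]. Then for all x̌ ∈ Y, all z ∈ ℝ^d, and all scalars τ_1, τ_2 > 0: ‖y−x̌‖² ≤ (1+8α²L²)‖x−x̌‖² − 2α(φ(z)−φ(x̌)) − (3/4)‖y−x‖² + (8+τ_2)α²‖∇φ(x̌)‖² + τ_1α²L²‖z−x̌‖² + (1/τ_1 + 1/τ_2)‖x−z‖². -/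
open Metric RealInnerProductSpace

private lemma young_aux (a b τ : ℝ) (hτ : 0 < τ) : 2*(a*b) ≤ τ*a^2 + b^2/τ := by
  have h : τ * (τ*a^2 + b^2/τ - 2*(a*b)) = (τ*a - b)^2 := by
    field_simp; ring
  nlinarith [sq_nonneg (τ*a - b), hτ]


private lemma grad_ineq {d : ℕ} {φ : EuclideanSpace ℝ (Fin d) → ℝ}
    (hφ : ConvexOn ℝ Set.univ φ) {v gv : EuclideanSpace ℝ (Fin d)}
    (hg : HasGradientAt φ gv v) (w : EuclideanSpace ℝ (Fin d)) :
    φ v + ⟪gv, w - v⟫ ≤ φ w := by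
  have hline : HasDerivAt (fun t : ℝ => v + t • (w - v)) (w - v) 0 := by
    simpa using ((hasDerivAt_id (0:ℝ)).smul_const (w - v)).const_add v
  have hc : HasDerivAt (fun t : ℝ => φ (v + t • (w - v))) ⟪gv, w - v⟫ 0 := by
    have h0 : (v + (0:ℝ) • (w - v)) = v := by simp
    have hf : HasFDerivAt φ (InnerProductSpace.toDual ℝ _ gv) (v + (0:ℝ) • (w - v)) := by
      rw [h0]; exact hg.hasFDerivAt
    have := hf.comp_hasDerivAt (0:ℝ) hline
    simpa [InnerProductSpace.toDual_apply_apply, Function.comp_def] using this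
  rw [hasDerivAt_iff_tendsto_slope] at hc
  have hc' : Filter.Tendsto (slope (fun t : ℝ => φ (v + t • (w - v))) 0)
      (nhdsWithin 0 (Set.Ioi 0)) (nhds ⟪gv, w - v⟫) :=
    hc.mono_left (nhdsWithin_mono 0 (fun t ht => ne_of_gt ht))
  have hbound : ⟪gv, w - v⟫ ≤ φ w - φ v := by
    refine le_of_tendsto hc' ?_
    filter_upwards [Ioc_mem_nhdsGT (show (0:ℝ) < 1 by norm_num)] with t ht
    have ht0 : 0 < t := ht.1
    have hcv : φ ((1 - t) • v + t • w) ≤ (1 - t) * φ v + t * φ w :=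
      hφ.2 (Set.mem_univ v) (Set.mem_univ w) (by linarith [ht.2]) ht0.le (by ring)
    have heq : (1 - t) • v + t • w = v + t • (w - v) := by
      module
    rw [heq] at hcv
    have : slope (fun t : ℝ => φ (v + t • (w - v))) 0 t
        = (φ (v + t • (w - v)) - φ v) / t := by
      rw [slope_def_field]; simp
    rw [this, div_le_iff₀ ht0]
    linarith
  linarith

set_option maxHeartbeats 1600000 in
/-- **Projected gradient step inequality, convex case (Lemma 7(a)).**
Let `Y ⊆ ℝ^d` be closed and convex, `φ` convex and differentiable with `L`-Lipschitz
gradient, `α > 0`, and `y = Π_Y[x − α∇φ(x)]`. Then for all `x̌ ∈ Y`, `z ∈ ℝ^d` and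
`τ₁, τ₂ > 0`:
`‖y−x̌‖² ≤ (1+8α²L²)‖x−x̌‖² − 2α(φ(z)−φ(x̌)) − (3/4)‖y−x‖² + (8+τ₂)α²‖∇φ(x̌)‖²
 + τ₁α²L²‖z−x̌‖² + (1/τ₁ + 1/τ₂)‖x−z‖²`. -/
theorem projected_gradient_step_convex
    {d : ℕ} (Y : Set (EuclideanSpace ℝ (Fin d)))
    (hY_closed : IsClosed Y) (hY_convex : Convex ℝ Y)
    (φ : EuclideanSpace ℝ (Fin d) → ℝ)
    (g : EuclideanSpace ℝ (Fin d) → EuclideanSpace ℝ (Fin d))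
    (hφ_convex : ConvexOn ℝ Set.univ φ)
    (hφ_grad : ∀ w, HasGradientAt φ (g w) w)
    (L : ℝ) (hL : 0 ≤ L)
    (hlip : ∀ w w', ‖g w - g w'‖ ≤ L * ‖w - w'‖)
    (α : ℝ) (hα : 0 < α)
    (x y : EuclideanSpace ℝ (Fin d))
    -- `y = Π_Y[x − α∇φ(x)]`, characterized as the closest point of `Y`
    (hy_mem : y ∈ Y)
    (hy_proj : ∀ w ∈ Y, dist (x - α • g x) y ≤ dist (x - α • g x) w) :
    ∀ xc ∈ Y, ∀ z : EuclideanSpace ℝ (Fin d), ∀ τ1 τ2 : ℝ, 0 < τ1 → 0 < τ2 →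
      ‖y - xc‖^2 ≤ (1 + 8*α^2*L^2) * ‖x - xc‖^2 - 2*α*(φ z - φ xc)
        - (3/4) * ‖y - x‖^2 + (8 + τ2)*α^2*‖g xc‖^2
        + τ1*α^2*L^2*‖z - xc‖^2 + (1/τ1 + 1/τ2)*‖x - z‖^2 := by
  intro xc hxc z τ1 τ2 hτ1 hτ2
  set p := x - α • g x with hp
  -- projection characterization
  haveI : Nonempty Y := ⟨⟨y, hy_mem⟩⟩
  have hmin : ‖p - y‖ = ⨅ w : Y, ‖p - w‖ := by
    refine le_antisymm (le_ciInf fun w => ?_) (ciInf_le ⟨0, ?_⟩ (⟨y, hy_mem⟩ : Y))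
    · simpa [dist_eq_norm] using hy_proj w w.2
    · rintro r ⟨w, rfl⟩; exact norm_nonneg _
  have hchar := (norm_eq_iInf_iff_real_inner_le_zero hY_convex hy_mem).mp hmin xc hxc
  -- expand the projection inequality
  have hpy : p - y = (x - y) - α • g x := by rw [hp]; module
  have hsplit : (xc - y : EuclideanSpace ℝ (Fin d)) = (xc - x) + (x - y) := by abel
  have hproj : ⟪x - y, xc - y⟫ - α * ⟪g x, xc - y⟫ ≤ 0 := by
    rw [hpy] at hchar
    rwa [inner_sub_left, real_inner_smul_left] at hchar
  have hA : ⟪x - y, xc - y⟫ = -⟪x - y, y - xc⟫ := by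
    rw [← inner_neg_right, neg_sub]
  have hBg : ⟪g x, xc - y⟫ = ⟪g x, xc - x⟫ + ⟪g x, x - y⟫ := by
    rw [hsplit, inner_add_right]
  -- norm identity
  have hid : ‖y - xc‖^2 = ‖x - xc‖^2 - ‖y - x‖^2 - 2 * ⟪x - y, y - xc⟫ := by
    have hsum : (x - y) + (y - xc) = x - xc := by abel
    have h1 := norm_add_sq_real (x - y) (y - xc)
    rw [hsum] at h1
    have h2 : ‖x - y‖ = ‖y - x‖ := norm_sub_rev x y
    rw [h2] at h1
    linarith
  -- convexity inequalities
  have hC : φ x + ⟪g x, xc - x⟫ ≤ φ xc := grad_ineq hφ_convex (hφ_grad x) xc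
  have hz : φ z + ⟪g z, x - z⟫ ≤ φ x := grad_ineq hφ_convex (hφ_grad z) x
  -- Cauchy-Schwarz bounds
  have hE : ⟪g x, x - y⟫ ≤ ‖g x‖ * ‖y - x‖ := by
    have := real_inner_le_norm (g x) (x - y)
    rwa [norm_sub_rev x y] at this
  have hD : ⟪g z, z - x⟫ ≤ ‖g z‖ * ‖x - z‖ := by
    have := real_inner_le_norm (g z) (z - x)
    rwa [norm_sub_rev z x] at this
  have hDneg : ⟪g z, z - x⟫ = -⟪g z, x - z⟫ := by
    rw [← inner_neg_right, neg_sub]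
  -- Lipschitz bounds on gradients
  have hgx : ‖g x‖ ≤ L * ‖x - xc‖ + ‖g xc‖ := by
    have h0 : g x = (g x - g xc) + g xc := by abel
    calc ‖g x‖ = ‖(g x - g xc) + g xc‖ := by rw [← h0]
    _ ≤ ‖g x - g xc‖ + ‖g xc‖ := norm_add_le _ _
    _ ≤ L * ‖x - xc‖ + ‖g xc‖ := by linarith [hlip x xc]
  have hgz : ‖g z‖ ≤ L * ‖z - xc‖ + ‖g xc‖ := by
    have h0 : g z = (g z - g xc) + g xc := by abel
    calc ‖g z‖ = ‖(g z - g xc) + g xc‖ := by rw [← h0]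
    _ ≤ ‖g z - g xc‖ + ‖g xc‖ := norm_add_le _ _
    _ ≤ L * ‖z - xc‖ + ‖g xc‖ := by linarith [hlip z xc]
  have h2α : (0:ℝ) ≤ 2 * α := by positivity
  -- main scalar bounds
  have hb1 : 2*α*(‖g x‖*‖y - x‖) ≤ (1/4)*‖y - x‖^2 + 8*α^2*L^2*‖x - xc‖^2
      + 8*α^2*‖g xc‖^2 := by
    have hsq : ‖g x‖^2 ≤ (L * ‖x - xc‖ + ‖g xc‖)^2 := by
      nlinarith [norm_nonneg (g x), hgx]
    nlinarith [sq_nonneg (‖y - x‖/2 - 2*α*‖g x‖),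
      mul_le_mul_of_nonneg_left hsq (show (0:ℝ) ≤ 4*α^2 by positivity),
      mul_nonneg (sq_nonneg α) (sq_nonneg (L*‖x - xc‖ - ‖g xc‖))]
  have hb2 : 2*α*(‖g z‖*‖x - z‖) ≤ τ1*α^2*L^2*‖z - xc‖^2 + (1/τ1)*‖x - z‖^2
      + τ2*α^2*‖g xc‖^2 + (1/τ2)*‖x - z‖^2 := by
    have hy1 := young_aux (α*L*‖z - xc‖) (‖x - z‖) τ1 hτ1
    have hy2 := young_aux (α*‖g xc‖) (‖x - z‖) τ2 hτ2
    have hstep : 2*α*(‖g z‖*‖x - z‖) ≤ 2*((α*L*‖z - xc‖)*‖x - z‖)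
        + 2*((α*‖g xc‖)*‖x - z‖) := by
      have := mul_le_mul_of_nonneg_right hgz (norm_nonneg (x - z))
      nlinarith [hα.le, norm_nonneg (x - z)]
    calc 2*α*(‖g z‖*‖x - z‖) ≤ 2*((α*L*‖z - xc‖)*‖x - z‖) + 2*((α*‖g xc‖)*‖x - z‖) := hstep
    _ ≤ τ1*(α*L*‖z - xc‖)^2 + ‖x - z‖^2/τ1 + (τ2*(α*‖g xc‖)^2 + ‖x - z‖^2/τ2) := by
        linarith
    _ = τ1*α^2*L^2*‖z - xc‖^2 + (1/τ1)*‖x - z‖^2 + τ2*α^2*‖g xc‖^2 + (1/τ2)*‖x - z‖^2 := by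
        rw [div_eq_mul_inv, div_eq_mul_inv]; ring
  -- multiplied forms
  have hCα : 2*α*⟪g x, xc - x⟫ ≤ 2*α*(φ xc - φ x) :=
    mul_le_mul_of_nonneg_left (by linarith) h2α
  have hq : φ xc - φ x ≤ (φ xc - φ z) + ‖g z‖*‖x - z‖ := by
    have : -⟪g z, x - z⟫ ≤ ‖g z‖*‖x - z‖ := by rw [← hDneg]; exact hD
    linarith
  have hqα : 2*α*(φ xc - φ x) ≤ 2*α*((φ xc - φ z) + ‖g z‖*‖x - z‖) :=
    mul_le_mul_of_nonneg_left hq h2α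
  have hEα : 2*α*⟪g x, x - y⟫ ≤ 2*α*(‖g x‖*‖y - x‖) :=
    mul_le_mul_of_nonneg_left hE h2α
  -- combine everything
  have hkey : -2 * ⟪x - y, y - xc⟫ ≤ 2*α*⟪g x, xc - x⟫ + 2*α*⟪g x, x - y⟫ := by
    rw [hA] at hproj
    rw [hBg] at hproj
    nlinarith [hproj]
  have t1 : ‖y - xc‖^2 ≤ ‖x - xc‖^2 - ‖y - x‖^2 + 2*α*(φ xc - φ x) + 2*α*(‖g x‖*‖y - x‖) := by
    linarith [hid, hkey, hCα, hEα]
  linarith [t1, hqα, hb1, hb2]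
end

section
/- (Projected gradient step inequality, strongly convex case.) Let Y ⊆ ℝ^d be a closed convex set, let φ:ℝ^d→ℝ be differentiable with L-Lipschitz gradient on ℝ^d and strongly convex on ℝ^d with constant σ > 0, let α > 0, x ∈ ℝ^d, and y = Π_Y[x − α∇φ(x)]. Then for all x̌ ∈ Y, all z ∈ ℝ^d, and all scalars τ_1, τ_2 > 0: ‖y−x̌‖² ≤ (1−ασ+8α²L²)‖x−x̌‖² − 2α⟨∇φ(x̌), z−x̌⟩ − (3/4)‖y−x‖² + (8+τ_2)α²‖∇φ(x̌)‖² + τ_1α²L²‖z−x̌‖² + (1/τ_1 + 1/τ_2)‖x−z‖². -/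
open Metric
open scoped RealInnerProductSpace

/-- **Projected gradient step inequality, strongly convex case (Lemma 7(b)).**
Let `Y ⊆ ℝ^d` be closed and convex, `φ` differentiable with `L`-Lipschitz gradient and
`σ`-strongly convex, `α > 0`, and `y = Π_Y[x − α∇φ(x)]`. Then for all `x̌ ∈ Y`,
`z ∈ ℝ^d` and `τ₁, τ₂ > 0`:
`‖y−x̌‖² ≤ (1−ασ+8α²L²)‖x−x̌‖² − 2α⟨∇φ(x̌), z−x̌⟩ − (3/4)‖y−x‖² + (8+τ₂)α²‖∇φ(x̌)‖²
 + τ₁α²L²‖z−x̌‖² + (1/τ₁ + 1/τ₂)‖x−z‖²`. -/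
theorem projected_gradient_step_strongly_convex
    {d : ℕ} (Y : Set (EuclideanSpace ℝ (Fin d)))
    (hY_closed : IsClosed Y) (hY_convex : Convex ℝ Y)
    (φ : EuclideanSpace ℝ (Fin d) → ℝ)
    (g : EuclideanSpace ℝ (Fin d) → EuclideanSpace ℝ (Fin d))
    (hφ_grad : ∀ w, HasGradientAt φ (g w) w)
    (L : ℝ) (hL : 0 ≤ L)
    (hlip : ∀ w w', ‖g w - g w'‖ ≤ L * ‖w - w'‖)
    (σ : ℝ) (hσ : 0 < σ)
    -- strong convexity: `φ(w') ≥ φ(w) + ⟨∇φ(w), w'−w⟩ + (σ/2)‖w'−w‖²`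
    (hstrong : ∀ w w', φ w + ⟪g w, w' - w⟫ + σ/2 * ‖w' - w‖^2 ≤ φ w')
    (α : ℝ) (hα : 0 < α)
    (x y : EuclideanSpace ℝ (Fin d))
    -- `y = Π_Y[x − α∇φ(x)]`, characterized as the closest point of `Y`
    (hy_mem : y ∈ Y)
    (hy_proj : ∀ w ∈ Y, dist (x - α • g x) y ≤ dist (x - α • g x) w) :
    ∀ xc ∈ Y, ∀ z : EuclideanSpace ℝ (Fin d), ∀ τ1 τ2 : ℝ, 0 < τ1 → 0 < τ2 →
      ‖y - xc‖^2 ≤ (1 - α*σ + 8*α^2*L^2) * ‖x - xc‖^2 - 2*α*⟪g xc, z - xc⟫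
        - (3/4) * ‖y - x‖^2 + (8 + τ2)*α^2*‖g xc‖^2
        + τ1*α^2*L^2*‖z - xc‖^2 + (1/τ1 + 1/τ2)*‖x - z‖^2 := by
  intro xc hxc z τ1 τ2 hτ1 hτ2
  -- AM-GM helper
  have key : ∀ t u v : ℝ, 0 < t → 2*u*v ≤ t*u^2 + (1/t)*v^2 := by
    intro t u v ht
    rw [← sub_nonneg]
    have h : t*u^2 + (1/t)*v^2 - 2*u*v = (t*u - v)^2 / t := by field_simp; ring
    rw [h]; positivity
  haveI : Nonempty Y := ⟨⟨y, hy_mem⟩⟩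
  set p : EuclideanSpace ℝ (Fin d) := x - α • g x with hp
  -- variational inequality for the projection
  have hinf : ‖p - y‖ = ⨅ w : Y, ‖p - w‖ := by
    refine le_antisymm (le_ciInf fun w => ?_)
      (ciInf_le ⟨0, by rintro r ⟨w, rfl⟩; positivity⟩ (⟨y, hy_mem⟩ : Y))
    simpa [dist_eq_norm] using hy_proj w w.2
  have hVI : ⟪p - y, xc - y⟫ ≤ 0 :=
    (norm_eq_iInf_iff_real_inner_le_zero hY_convex hy_mem).mp hinf xc hxc
  have h1 : ⟪y - x, y - xc⟫ ≤ -(α * ⟪g x, y - xc⟫) := by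
    have hexp : ⟪p - y, xc - y⟫ = ⟪y - x, y - xc⟫ + α * ⟪g x, y - xc⟫ := by
      rw [hp]
      simp only [inner_sub_left, inner_sub_right, real_inner_smul_left]
      ring
    rw [hexp] at hVI
    linarith
  -- strong monotonicity
  have hmono : σ * ‖x - xc‖^2 ≤ ⟪g x - g xc, x - xc⟫ := by
    have ha := hstrong x xc
    have hb := hstrong xc x
    have hn : ‖xc - x‖ = ‖x - xc‖ := norm_sub_rev _ _
    have hi : ⟪g x, xc - x⟫ = -⟪g x, x - xc⟫ := by
      rw [show xc - x = -(x - xc) from by abel, inner_neg_right]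
    have hsplit : ⟪g x - g xc, x - xc⟫ = ⟪g x, x - xc⟫ - ⟪g xc, x - xc⟫ :=
      inner_sub_left _ _ _
    rw [hn] at ha
    rw [hi] at ha
    nlinarith [ha, hb, hsplit]
  -- splitting of the cross term
  have hsplit : ⟪g x, y - xc⟫ = ⟪g x - g xc, x - xc⟫ + ⟪g x - g xc, y - x⟫
      + ⟪g xc, y - x⟫ + ⟪g xc, x - z⟫ + ⟪g xc, z - xc⟫ := by
    simp only [inner_sub_left, inner_sub_right]
    ring
  have heq : α * ⟪g x, y - xc⟫ = α * ⟪g x - g xc, x - xc⟫ + α * ⟪g x - g xc, y - x⟫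
      + α * ⟪g xc, y - x⟫ + α * ⟪g xc, x - z⟫ + α * ⟪g xc, z - xc⟫ := by
    rw [hsplit]; ring
  -- Cauchy–Schwarz bounds
  have hB1 : -⟪g x - g xc, y - x⟫ ≤ (L * ‖x - xc‖) * ‖y - x‖ := by
    have h2 : ‖g xc - g x‖ ≤ L * ‖x - xc‖ := by
      rw [norm_sub_rev]; exact hlip x xc
    calc -⟪g x - g xc, y - x⟫ = ⟪g xc - g x, y - x⟫ := by
          rw [show g xc - g x = -(g x - g xc) from by abel, inner_neg_left]
      _ ≤ ‖g xc - g x‖ * ‖y - x‖ := real_inner_le_norm _ _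
      _ ≤ (L * ‖x - xc‖) * ‖y - x‖ := mul_le_mul_of_nonneg_right h2 (norm_nonneg _)
  have hC1 : -⟪g xc, y - x⟫ ≤ ‖g xc‖ * ‖y - x‖ := by
    have := real_inner_le_norm (-(g xc)) (y - x)
    simpa using this
  have hD1 : -⟪g xc, x - z⟫ ≤ ‖g xc‖ * ‖x - z‖ := by
    have := real_inner_le_norm (-(g xc)) (x - z)
    simpa using this
  -- base identity
  have hbase : ‖y - xc‖^2 = ‖x - xc‖^2 - ‖y - x‖^2 + 2*⟪y - x, y - xc⟫ := by
    rw [show y - xc = (y - x) + (x - xc) from by abel, norm_add_sq_real,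
      inner_add_right, real_inner_self_eq_norm_sq]
    ring
  have h2α : (0:ℝ) ≤ 2*α := by positivity
  have p1 : 2*α*(σ*‖x - xc‖^2) ≤ 2*α*⟪g x - g xc, x - xc⟫ :=
    mul_le_mul_of_nonneg_left hmono h2α
  have p2 : 2*α*(-⟪g x - g xc, y - x⟫) ≤ 2*α*((L*‖x - xc‖)*‖y - x‖) :=
    mul_le_mul_of_nonneg_left hB1 h2α
  have p3 : 2*α*(-⟪g xc, y - x⟫) ≤ 2*α*(‖g xc‖*‖y - x‖) :=
    mul_le_mul_of_nonneg_left hC1 h2α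
  have p4 : 2*α*(-⟪g xc, x - z⟫) ≤ 2*α*(‖g xc‖*‖x - z‖) :=
    mul_le_mul_of_nonneg_left hD1 h2α
  have q2 : 2*(α*L*‖x - xc‖)*‖y - x‖ ≤ 8*(α*L*‖x - xc‖)^2 + (1/8)*‖y - x‖^2 :=
    key 8 _ _ (by norm_num)
  have q3 : 2*(α*‖g xc‖)*‖y - x‖ ≤ 8*(α*‖g xc‖)^2 + (1/8)*‖y - x‖^2 :=
    key 8 _ _ (by norm_num)
  have q4 : 2*(α*‖g xc‖)*‖x - z‖ ≤ τ2*(α*‖g xc‖)^2 + (1/τ2)*‖x - z‖^2 :=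
    key τ2 _ _ hτ2
  have r1 : 0 ≤ α*σ*‖x - xc‖^2 := by positivity
  have r2 : 0 ≤ τ1*α^2*L^2*‖z - xc‖^2 := by positivity
  have r3 : 0 ≤ (1/τ1)*‖x - z‖^2 := by positivity
  linarith [hbase, h1, heq, p1, p2, p3, p4, q2, q3, q4, r1, r2, r3]
end

section
/- (Coordinate consensus contraction.) Let {W(k)}_{k≥1} be an iid sequence of random m×m matrices, each realization of which is symmetric, doubly stochastic, and idempotent (W(k)² = W(k)); let W̄ = E[W(k)] and let λ be the second largest eigenvalue of W̄. Let {ε(k)} be random vectors in ℝ^m, and let {F_k} be a filtration such that θ(k−1) is F_{k−1}-measurable and W(k) is independent of F_{k−1}, where the sequence {θ(k)} ⊂ ℝ^m evolves as θ(k) = W(k)θ(k−1) + ε(k) for k ≥ 1. Define Δ(k) = θ(k) − (1/m)𝟏𝟏ᵀθ(k). Then with probability 1, for all k ≥ 1: E[‖Δ(k)‖ | F_{k−1}] ≤ √λ·‖Δ(k−1)‖ + E[‖ε(k)‖ | F_{k−1}]. -/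
open MeasureTheory ProbabilityTheory Filter Matrix RealInnerProductSpace

namespace CCCaux

noncomputable def sumL (m : ℕ) : EuclideanSpace ℝ (Fin m) →ₗ[ℝ] ℝ where
  toFun := fun x => ∑ i, x i
  map_add' x y := by simp [Finset.sum_add_distrib]
  map_smul' c x := by simp [Finset.mul_sum]

noncomputable def matL {m : ℕ} (A : Matrix (Fin m) (Fin m) ℝ) :
    EuclideanSpace ℝ (Fin m) →ₗ[ℝ] EuclideanSpace ℝ (Fin m) where
  toFun := fun x => WithLp.toLp 2 (A.mulVec x)
  map_add' x y := by simp [Matrix.mulVec_add]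
  map_smul' c x := by simp [Matrix.mulVec_smul]

/-- `mulVec` as a map on Euclidean space. -/
noncomputable def mulVecE {m : ℕ} (w : Matrix (Fin m) (Fin m) ℝ)
    (y : EuclideanSpace ℝ (Fin m)) : EuclideanSpace ℝ (Fin m) := WithLp.toLp 2 (w.mulVec y)

lemma normE_sq {m : ℕ} (x : EuclideanSpace ℝ (Fin m)) : ‖x‖^2 = ∑ i, x i ^2 := by
  rw [EuclideanSpace.norm_eq, Real.sq_sqrt (by positivity)]
  simp [sq_abs]

lemma innerE {m : ℕ} (x y : EuclideanSpace ℝ (Fin m)) : ⟪x, y⟫ = ∑ i, x i * y i := by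
  simp [PiLp.inner_apply, RCLike.inner_apply, conj_trivial]
  exact Finset.sum_congr rfl fun i _ => mul_comm _ _

lemma measurableE_of_coords {m : ℕ} {γ : Type*} {mγ : MeasurableSpace γ}
    {f : γ → EuclideanSpace ℝ (Fin m)} (h : ∀ i, Measurable fun a => f a i) :
    Measurable f := by
  have h2 : Measurable fun a i => f a i := measurable_pi_lambda _ h
  exact (MeasurableEquiv.toLp 2 (Fin m → ℝ)).measurable.comp h2

lemma measurableE_coord {m : ℕ} {γ : Type*} {mγ : MeasurableSpace γ}
    {f : γ → EuclideanSpace ℝ (Fin m)} (hf : Measurable f) (i : Fin m) :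
    Measurable fun a => f a i := by
  have h2 : Measurable fun a => (MeasurableEquiv.toLp 2 (Fin m → ℝ)).symm (f a) :=
    (MeasurableEquiv.toLp 2 (Fin m → ℝ)).symm.measurable.comp hf
  exact (measurable_pi_apply i).comp h2

lemma quad_id {m : ℕ} (w : Matrix (Fin m) (Fin m) ℝ) (hs : w.IsSymm) (hi : w * w = w)
    (y : Fin m → ℝ) : ∑ i, (w.mulVec y i)^2 = y ⬝ᵥ w.mulVec y := by
  have h1 : ∑ i, (w.mulVec y i)^2 = (w.mulVec y) ⬝ᵥ (w.mulVec y) := by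
    simp [dotProduct, sq]
  have h2 : w.vecMul (w.mulVec y) = w.mulVec (w.mulVec y) := by
    rw [← Matrix.mulVec_transpose, hs]
  rw [h1, dotProduct_mulVec, h2, Matrix.mulVec_mulVec, hi, dotProduct_comm]

/-- A symmetric idempotent (stochastic) matrix is an orthogonal projection, hence a
contraction in the Euclidean norm. -/
lemma mulVec_contract {m : ℕ} (w : Matrix (Fin m) (Fin m) ℝ) (hs : w.IsSymm) (hi : w * w = w)
    (y : EuclideanSpace ℝ (Fin m)) : ‖mulVecE w y‖ ≤ ‖y‖ := by
  have hsq : ‖mulVecE w y‖^2 = ⟪y, mulVecE w y⟫ := by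
    rw [normE_sq, innerE]
    show ∑ i, (w.mulVec y i)^2 = ∑ i, y i * w.mulVec y i
    rw [quad_id w hs hi y]
    simp [dotProduct]
  have hcs : ⟪y, mulVecE w y⟫ ≤ ‖y‖ * ‖mulVecE w y‖ := real_inner_le_norm _ _
  have h1 : ‖mulVecE w y‖^2 ≤ ‖y‖ * ‖mulVecE w y‖ := by rw [hsq]; exact hcs
  rcases eq_or_lt_of_le (norm_nonneg (mulVecE w y)) with h | h
  · rw [← h]; exact norm_nonneg y
  · nlinarith [norm_nonneg y]

/-- Removing the mean decreases the Euclidean norm. -/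
lemma proj_bound {m : ℕ} (hm : 0 < m) (x z : EuclideanSpace ℝ (Fin m))
    (hz : ∀ i, z i = x i - (∑ j, x j)/m) : ‖z‖ ≤ ‖x‖ := by
  have hm' : ((m:ℝ)) ≠ 0 := Nat.cast_ne_zero.mpr hm.ne'
  set c : ℝ := (∑ j, x j)/m with hc
  have hmc : ∑ j, x j = m * c := by rw [hc]; field_simp
  have hsq : ‖z‖^2 ≤ ‖x‖^2 := by
    rw [normE_sq, normE_sq]
    have h1 : ∀ i, z i ^2 = x i^2 - 2*c*x i + c^2 := fun i => by rw [hz i, ← hc]; ring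
    calc ∑ i, z i ^2 = ∑ i, (x i^2 - 2*c*x i + c^2) := Finset.sum_congr rfl fun i _ => h1 i
      _ = (∑ i, x i^2) - 2*c*(∑ i, x i) + m*c^2 := by
          rw [Finset.sum_add_distrib, Finset.sum_sub_distrib, Finset.sum_const,
            Finset.card_univ, Fintype.card_fin, ← Finset.mul_sum]
          push_cast
          ring
      _ = (∑ i, x i^2) - m*c^2 := by rw [hmc]; ring
      _ ≤ ∑ i, x i^2 := by nlinarith [sq_nonneg c, Nat.cast_nonneg (α := ℝ) m]
  calc ‖z‖ = Real.sqrt (‖z‖^2) := (Real.sqrt_sq (norm_nonneg z)).symm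
    _ ≤ Real.sqrt (‖x‖^2) := Real.sqrt_le_sqrt hsq
    _ = ‖x‖ := Real.sqrt_sq (norm_nonneg x)

lemma rayleigh_bound {m : ℕ} (A : Matrix (Fin m) (Fin m) ℝ) (hA : A.IsSymm)
    (hcol : ∀ j, ∑ i, A i j = 1) (lam : ℝ)
    (hub : ∀ t : ℝ, (∃ y : Fin m → ℝ, y ≠ 0 ∧ ∑ i, y i = 0 ∧ A.mulVec y = t • y) → t ≤ lam)
    (y : EuclideanSpace ℝ (Fin m)) (hy : ∑ i, y i = 0) :
    ∑ i, y i * A.mulVec y i ≤ lam * ‖y‖^2 := by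
  by_cases hy0 : y = 0
  · have h0 : ∀ i, y i = 0 := fun i => by rw [hy0]; rfl
    simp [h0, normE_sq]
  set V : Submodule ℝ (EuclideanSpace ℝ (Fin m)) := LinearMap.ker (sumL m) with hV
  have hyV : y ∈ V := hy
  have hinv : ∀ x ∈ V, matL A x ∈ V := by
    intro x hx
    have hx' : ∑ i, x i = 0 := hx
    show ∑ i, A.mulVec x i = 0
    simp only [Matrix.mulVec, dotProduct]
    rw [Finset.sum_comm]
    calc ∑ j, ∑ i, A i j * x j = ∑ j, (∑ i, A i j) * x j := by
          simp [Finset.sum_mul]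
      _ = ∑ j, x j := by simp [hcol]
      _ = 0 := hx'
  set T : V →ₗ[ℝ] V := (matL A).restrict hinv with hT
  have hcoeT : ∀ x : V, (T x : EuclideanSpace ℝ (Fin m)) = A.mulVec x := fun x => rfl
  have hsym' : ∀ i j, A j i = A i j := fun i j => congrFun (congrFun hA i) j
  have hTsym : T.IsSymmetric := by
    have key : ∀ a b : V, ⟪T a, b⟫ = ∑ i, ∑ j, A i j * a.1 j * b.1 i := by
      intro a b
      rw [Submodule.coe_inner, innerE, hcoeT]
      simp [Matrix.mulVec, dotProduct, Finset.sum_mul]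
    intro u v
    rw [key u v, real_inner_comm, key v u, Finset.sum_comm]
    apply Finset.sum_congr rfl; intro i _
    apply Finset.sum_congr rfl; intro j _
    rw [hsym' i j]; ring
  have hx0 : (⟨y, hyV⟩ : V) ≠ 0 := by
    intro h
    exact hy0 (by simpa using congrArg (Subtype.val) h)
  haveI : Nontrivial V := nontrivial_of_ne _ _ hx0
  set r : ℝ := ⨆ x : { x : V // x ≠ 0 }, RCLike.re ⟪T x, x⟫ / ‖(x : V)‖ ^ 2 with hr
  have hev : Module.End.HasEigenvalue T r := by
    exact hTsym.hasEigenvalue_iSup_of_finiteDimensional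
  obtain ⟨v, hv⟩ := hev.exists_hasEigenvector
  have hrlam : r ≤ lam := by
    apply hub
    refine ⟨(v : EuclideanSpace ℝ (Fin m)), ?_, v.2, ?_⟩
    · simpa [Submodule.coe_eq_zero] using hv.2
    · have := hv.apply_eq_smul
      calc A.mulVec v.1 = ((T v : V) : EuclideanSpace ℝ (Fin m)) := (hcoeT v).symm
        _ = ((r • v : V) : EuclideanSpace ℝ (Fin m)) := by rw [this]
        _ = r • (v : EuclideanSpace ℝ (Fin m)) := rfl
  have hbdd : BddAbove (Set.range fun x : { x : V // x ≠ 0 } =>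
      RCLike.re ⟪T (x : V), (x : V)⟫ / ‖(x : V)‖ ^ 2) := by
    refine ⟨‖LinearMap.toContinuousLinearMap T‖, ?_⟩
    rintro _ ⟨x, rfl⟩
    have hx : (0:ℝ) < ‖(x : V)‖^2 := by
      have : ‖(x:V)‖ ≠ 0 := by simpa using x.2
      positivity
    rw [div_le_iff₀ hx]
    calc RCLike.re ⟪T (x : V), (x : V)⟫ ≤ ‖T (x:V)‖ * ‖(x:V)‖ := by
          simpa using real_inner_le_norm (T (x:V)) (x:V)
      _ ≤ (‖LinearMap.toContinuousLinearMap T‖ * ‖(x:V)‖) * ‖(x:V)‖ := by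
          gcongr
          exact (LinearMap.toContinuousLinearMap T).le_opNorm _
      _ = ‖LinearMap.toContinuousLinearMap T‖ * ‖(x:V)‖^2 := by ring
  have hray : ⟪T ⟨y, hyV⟩, (⟨y, hyV⟩ : V)⟫ ≤ r * ‖(⟨y, hyV⟩ : V)‖^2 := by
    have h1 : RCLike.re ⟪T ⟨y, hyV⟩, (⟨y, hyV⟩ : V)⟫ / ‖(⟨y, hyV⟩ : V)‖^2 ≤ r :=
      le_ciSup hbdd (⟨⟨y, hyV⟩, hx0⟩ : { x : V // x ≠ 0 })
    have hn : (0:ℝ) < ‖(⟨y, hyV⟩ : V)‖^2 := by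
      have : ‖(⟨y, hyV⟩ : V)‖ ≠ 0 := by simpa using hx0
      positivity
    have := (div_le_iff₀ hn).mp h1
    simpa using this
  have hnorm : ‖(⟨y, hyV⟩ : V)‖ = ‖y‖ := rfl
  have hinner : ⟪T ⟨y, hyV⟩, (⟨y, hyV⟩ : V)⟫ = ∑ i, y i * A.mulVec y i := by
    rw [Submodule.coe_inner, innerE, hcoeT]
    exact Finset.sum_congr rfl fun i _ => mul_comm _ _
  calc ∑ i, y i * A.mulVec y i = ⟪T ⟨y, hyV⟩, (⟨y, hyV⟩ : V)⟫ := hinner.symm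
    _ ≤ r * ‖y‖^2 := by rw [← hnorm]; exact hray
    _ ≤ lam * ‖y‖^2 := by
        have : (0:ℝ) ≤ ‖y‖^2 := sq_nonneg _
        nlinarith

/-- Freezing lemma: `E[Φ(X,Y) | m'] = ψ(Y)` when `X ⟂ m'` and `Y` is `m'`-measurable. -/
lemma freezing {Ω : Type*} {m' m0 : MeasurableSpace Ω} (hm' : m' ≤ m0)
    (μ : Measure Ω) [IsProbabilityMeasure μ]
    {α β : Type*} [MeasurableSpace α] [MeasurableSpace β]
    (X : Ω → α) (hX : Measurable X)
    (Y : Ω → β) (hY : Measurable[m'] Y)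
    (hindep : Indep (MeasurableSpace.comap X inferInstance) m' μ)
    (Φ : α → β → ℝ) (hΦ : Measurable (Function.uncurry Φ))
    (g : β → ℝ) (hbd : ∀ x y, |Φ x y| ≤ g y)
    (hgint : Integrable (fun ω => g (Y ω)) μ) :
    μ[(fun ω => Φ (X ω) (Y ω)) | m'] =ᵐ[μ] fun ω => ∫ x, Φ x (Y ω) ∂(μ.map X) := by
  haveI : IsProbabilityMeasure (μ.map X) := Measure.isProbabilityMeasure_map hX.aemeasurable
  set ψ : β → ℝ := fun y => ∫ x, Φ x y ∂(μ.map X) with hψdef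
  have hYm : Measurable Y := hY.mono hm' le_rfl
  have hψsm : StronglyMeasurable ψ := by
    apply MeasureTheory.StronglyMeasurable.integral_prod_left'
      (f := fun z : α × β => Φ z.1 z.2)
    exact hΦ.stronglyMeasurable
  have hψbd : ∀ y, |ψ y| ≤ g y := by
    intro y
    have h1 : |ψ y| ≤ ∫ x, |Φ x y| ∂(μ.map X) := by
      simpa [Real.norm_eq_abs] using
        norm_integral_le_integral_norm (μ := μ.map X) (f := fun x => Φ x y)
    refine h1.trans ?_
    calc ∫ x, |Φ x y| ∂(μ.map X) ≤ ∫ _x, g y ∂(μ.map X) := by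
          apply integral_mono_of_nonneg (ae_of_all _ fun x => abs_nonneg _)
            (integrable_const _) (ae_of_all _ fun x => hbd x y)
      _ = g y := by simp
  have hcomp_meas : Measurable (fun ω => Φ (X ω) (Y ω)) :=
    hΦ.comp (hX.prodMk hYm)
  have hf_int : Integrable (fun ω => Φ (X ω) (Y ω)) μ :=
    Integrable.mono' hgint hcomp_meas.aestronglyMeasurable
      (ae_of_all _ fun ω => by simpa [Real.norm_eq_abs] using hbd (X ω) (Y ω))
  have hψY_int : Integrable (fun ω => ψ (Y ω)) μ :=
    Integrable.mono' hgint ((hψsm.measurable.comp hYm).aestronglyMeasurable)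
      (ae_of_all _ fun ω => by simpa [Real.norm_eq_abs] using hψbd (Y ω))
  haveI : SigmaFinite (μ.trim hm') := by
    have : IsFiniteMeasure (μ.trim hm') := isFiniteMeasure_trim hm'
    infer_instance
  symm
  refine (ae_eq_condExp_of_forall_setIntegral_eq hm' hf_int
    (fun s _ _ => hψY_int.integrableOn) (fun s hs _ => ?_)
    (StronglyMeasurable.aestronglyMeasurable (hψsm.comp_measurable hY)))
  have hsm0 : MeasurableSet s := hm' s hs
  set e : Ω → ℝ := s.indicator (fun _ => (1:ℝ)) with he
  have he_m' : Measurable[m'] e := measurable_const.indicator hs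
  set P : Ω → β × ℝ := fun ω => (Y ω, e ω) with hP
  have hP_m' : Measurable[m'] P := hY.prodMk he_m'
  have hPm : Measurable P := hP_m'.mono hm' le_rfl
  have hIndepPX : IndepFun P X μ := by
    rw [IndepFun_iff_Indep]
    rw [Indep_iff] at hindep ⊢
    intro t1 t2 h1 h2
    rw [Set.inter_comm, mul_comm]
    exact hindep t2 t1 h2 (hP_m'.comap_le t1 h1)
  have hmap : μ.map (fun ω => (P ω, X ω)) = (μ.map P).prod (μ.map X) :=
    (indepFun_iff_map_prod_eq_prod_map_map hPm.aemeasurable hX.aemeasurable).mp hIndepPX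
  set Ψ : (β × ℝ) × α → ℝ := fun z => z.1.2 * Φ z.2 z.1.1 with hΨ
  have hΨmeas : Measurable Ψ := by
    apply Measurable.mul
    · exact measurable_snd.comp measurable_fst
    · exact hΦ.comp (measurable_snd.prodMk (measurable_fst.comp measurable_fst))
  have hpair : Measurable (fun ω => (P ω, X ω)) := hPm.prodMk hX
  have hΨint : Integrable Ψ ((μ.map P).prod (μ.map X)) := by
    rw [← hmap]
    rw [integrable_map_measure hΨmeas.aestronglyMeasurable hpair.aemeasurable]
    have hcomp : (Ψ ∘ fun ω => (P ω, X ω)) = fun ω => e ω * Φ (X ω) (Y ω) := rfl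
    rw [hcomp]
    refine Integrable.mono' hgint ((he_m'.mono hm' le_rfl).mul hcomp_meas).aestronglyMeasurable
      (ae_of_all _ fun ω => ?_)
    rw [Real.norm_eq_abs, abs_mul]
    have he1 : |e ω| ≤ 1 := by
      by_cases h : ω ∈ s <;> simp [he, Set.indicator_apply, h]
    calc |e ω| * |Φ (X ω) (Y ω)| ≤ 1 * g (Y ω) := by
          apply mul_le_mul he1 (hbd _ _) (abs_nonneg _) zero_le_one
      _ = g (Y ω) := one_mul _
  have lhs_eq : ∫ ω in s, Φ (X ω) (Y ω) ∂μ = ∫ ω, e ω * Φ (X ω) (Y ω) ∂μ := by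
    rw [← integral_indicator hsm0]
    congr 1
    funext ω
    by_cases h : ω ∈ s <;> simp [he, Set.indicator_apply, h]
  have rhs_eq : ∫ ω in s, ψ (Y ω) ∂μ = ∫ ω, e ω * ψ (Y ω) ∂μ := by
    rw [← integral_indicator hsm0]
    congr 1
    funext ω
    by_cases h : ω ∈ s <;> simp [he, Set.indicator_apply, h]
  rw [lhs_eq, rhs_eq]
  have step1 : ∫ ω, e ω * Φ (X ω) (Y ω) ∂μ = ∫ z, Ψ z ∂((μ.map P).prod (μ.map X)) := by
    rw [← hmap, integral_map hpair.aemeasurable hΨmeas.aestronglyMeasurable]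
  have step2 : ∫ z, Ψ z ∂((μ.map P).prod (μ.map X)) = ∫ p, p.2 * ψ p.1 ∂(μ.map P) := by
    rw [integral_prod _ hΨint]
    congr 1
    funext p
    rw [← integral_const_mul]
  have step3 : ∫ p, p.2 * ψ p.1 ∂(μ.map P) = ∫ ω, e ω * ψ (Y ω) ∂μ := by
    have hmeas2 : AEStronglyMeasurable (fun p : β × ℝ => p.2 * ψ p.1) (μ.map P) :=
      (measurable_snd.mul (hψsm.measurable.comp measurable_fst)).aestronglyMeasurable
    rw [integral_map hPm.aemeasurable hmeas2]
  rw [step1, step2, step3]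

end CCCaux

open CCCaux

set_option maxHeartbeats 1000000 in
/-- **Coordinate consensus contraction (Lemma of the disagreement analysis).**
Let `{W(k)}` be iid random symmetric doubly stochastic idempotent `m×m` matrices, with
`W̄ = E[W(k)]` and `λ` the second largest eigenvalue of `W̄`. Let
`θ(k) = W(k)θ(k−1) + ε(k)`, with `θ(k−1)` being `F_{k−1}`-measurable and `W(k)`
independent of `F_{k−1}`. With `Δ(k) = θ(k) − (1/m)𝟏𝟏ᵀθ(k)`, with probability 1,
`E[‖Δ(k)‖ | F_{k−1}] ≤ √λ·‖Δ(k−1)‖ + E[‖ε(k)‖ | F_{k−1}]` for all `k ≥ 1`. -/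
theorem coordinate_consensus_contraction
    {m : ℕ} (hm : 0 < m)
    {Ω : Type*} [MeasurableSpace Ω] (μ : Measure Ω) [IsProbabilityMeasure μ]
    (W : ℕ → Ω → Matrix (Fin m) (Fin m) ℝ)
    (hW_meas : ∀ k, Measurable fun ω => (fun i j => W k ω i j : Fin m → Fin m → ℝ))
    (hW_symm : ∀ k ω, (W k ω).IsSymm)
    (hW_nonneg : ∀ k ω i j, 0 ≤ W k ω i j)
    (hW_row : ∀ k ω i, ∑ j, W k ω i j = 1)
    (hW_col : ∀ k ω j, ∑ i, W k ω i j = 1)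
    (hW_idem : ∀ k ω, W k ω * W k ω = W k ω)
    -- identically distributed
    (hW_id : ∀ k, 1 ≤ k →
      μ.map (fun ω => (fun i j => W k ω i j : Fin m → Fin m → ℝ)) =
      μ.map (fun ω => (fun i j => W 1 ω i j : Fin m → Fin m → ℝ)))
    (F : Filtration ℕ ‹MeasurableSpace Ω›)
    -- `W(k)` is independent of `F_{k−1}`
    (hW_indep : ∀ k, 1 ≤ k → Indep
      (MeasurableSpace.comap (fun ω => (fun i j => W k ω i j : Fin m → Fin m → ℝ))
        inferInstance) (F (k-1)) μ)
    (θ ε : ℕ → Ω → EuclideanSpace ℝ (Fin m))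
    (hθ_meas : ∀ k, Measurable[F k] (θ k))
    (hε_meas : ∀ k, Measurable (ε k))
    (hε_int : ∀ k, Integrable (fun ω => ‖ε k ω‖) μ)
    (hθ_int : ∀ k, Integrable (fun ω => ‖θ k ω‖) μ)
    -- dynamics: `θ(k) = W(k)θ(k−1) + ε(k)`
    (hrec : ∀ k, 1 ≤ k → ∀ ω i, θ k ω i = (∑ j, W k ω i j * θ (k-1) ω j) + ε k ω i)
    -- `W̄ = E[W(k)]`
    (Wbar : Matrix (Fin m) (Fin m) ℝ)
    (hWbar : ∀ i j, Wbar i j = ∫ ω, W 1 ω i j ∂μ)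
    -- `λ` is the second largest eigenvalue of `W̄`: the largest eigenvalue on `1^⊥`
    (lam : ℝ)
    (hlam : IsGreatest
      {t : ℝ | ∃ y : Fin m → ℝ, y ≠ 0 ∧ ∑ i, y i = 0 ∧ Wbar.mulVec y = t • y} lam)
    -- `Δ(k) = θ(k) − (1/m)𝟏𝟏ᵀθ(k)`
    (Δ : ℕ → Ω → EuclideanSpace ℝ (Fin m))
    (hΔ : ∀ k ω i, Δ k ω i = θ k ω i - (∑ j, θ k ω j) / m) :
    ∀ k, 1 ≤ k → ∀ᵐ ω ∂μ,
      (μ[(fun ω' => ‖Δ k ω'‖) | F (k-1)]) ω ≤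
        Real.sqrt lam * ‖Δ (k-1) ω‖ + (μ[(fun ω' => ‖ε k ω'‖) | F (k-1)]) ω := by
  intro k hk
  set n : ℕ := k - 1 with hn
  -- the random matrix at time k, as a measurable function
  set X : Ω → (Fin m → Fin m → ℝ) := fun ω => (fun i j => W k ω i j) with hXdef
  have hXmeas : Measurable X := hW_meas k
  -- measurability of Δ
  have hΔmeas : ∀ j, Measurable[F j] (Δ j) := by
    intro j
    apply measurableE_of_coords
    intro i
    simp only [hΔ]
    exact (measurableE_coord (hθ_meas j) i).sub
      ((Finset.measurable_sum Finset.univ fun l _ =>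
        measurableE_coord (hθ_meas j) l).div_const _)
  have hΔmeas0 : ∀ j, Measurable (Δ j) := fun j => (hΔmeas j).mono (F.le j) le_rfl
  -- Δ sums to zero
  have hΔsum : ∀ j ω, ∑ i, Δ j ω i = 0 := by
    intro j ω
    have hm' : ((m:ℝ)) ≠ 0 := Nat.cast_ne_zero.mpr hm.ne'
    simp only [hΔ]
    rw [Finset.sum_sub_distrib, Finset.sum_const, Finset.card_univ, Fintype.card_fin,
      nsmul_eq_mul]
    field_simp
    ring
  -- integrability of ‖Δ j‖
  have hΔnorm_meas : ∀ j, Measurable fun ω => ‖Δ j ω‖ := fun j =>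
    measurable_norm.comp (hΔmeas0 j)
  have hΔint : ∀ j, Integrable (fun ω => ‖Δ j ω‖) μ := by
    intro j
    refine Integrable.mono' (hθ_int j) (hΔnorm_meas j).aestronglyMeasurable
      (ae_of_all _ fun ω => ?_)
    rw [Real.norm_eq_abs, abs_of_nonneg (norm_nonneg _)]
    exact proj_bound hm (θ j ω) (Δ j ω) (fun i => hΔ j ω i)
  -- the contraction functional
  set Φ : (Fin m → Fin m → ℝ) → EuclideanSpace ℝ (Fin m) → ℝ :=
    fun w y => min ‖mulVecE w y‖ ‖y‖ with hΦdef
  have hmulmeas : Measurable (fun z : (Fin m → Fin m → ℝ) × EuclideanSpace ℝ (Fin m) =>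
      mulVecE z.1 z.2) := by
    apply measurableE_of_coords
    intro i
    show Measurable fun z : (Fin m → Fin m → ℝ) × EuclideanSpace ℝ (Fin m) =>
      ∑ j, z.1 i j * z.2 j
    apply Finset.measurable_sum
    intro j _
    have h1 : Measurable fun z : (Fin m → Fin m → ℝ) × EuclideanSpace ℝ (Fin m) => z.1 i j :=
      (measurable_pi_apply j).comp ((measurable_pi_apply i).comp measurable_fst)
    have h2 : Measurable fun z : (Fin m → Fin m → ℝ) × EuclideanSpace ℝ (Fin m) => z.2 j :=
      measurableE_coord measurable_snd j
    exact h1.mul h2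
  have hΦmeas : Measurable (Function.uncurry Φ) := by
    apply Measurable.min
    · exact measurable_norm.comp hmulmeas
    · exact measurable_norm.comp measurable_snd
  have hΦbd : ∀ x y, |Φ x y| ≤ ‖y‖ := by
    intro x y
    rw [abs_of_nonneg (le_min (norm_nonneg _) (norm_nonneg _))]
    exact min_le_right _ _
  -- Φ at realized matrices
  have hΦeq : ∀ ω y, Φ (X ω) y = ‖mulVecE (W k ω) y‖ := by
    intro ω y
    exact min_eq_left (mulVec_contract (W k ω) (hW_symm k ω) (hW_idem k ω) y)
  -- the conditional term
  set q : Ω → ℝ := fun ω => Φ (X ω) (Δ n ω) with hqdef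
  have hpair1 : Measurable fun ω => (X ω, Δ n ω) := hXmeas.prodMk (hΔmeas0 n)
  have hqc : q = Function.uncurry Φ ∘ (fun ω => (X ω, Δ n ω)) := rfl
  have hq_meas : Measurable q := hqc ▸ hΦmeas.comp hpair1
  have hq_int : Integrable q μ := by
    refine Integrable.mono' (hΔint n) hq_meas.aestronglyMeasurable
      (ae_of_all _ fun ω => ?_)
    rw [Real.norm_eq_abs]
    exact hΦbd _ _
  set e : Ω → ℝ := fun ω' => ‖ε k ω'‖ with hedef
  -- pointwise decomposition bound
  have hdecomp : ∀ ω, ‖Δ k ω‖ ≤ q ω + e ω := by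
    intro ω
    set v : EuclideanSpace ℝ (Fin m) := WithLp.toLp 2 (fun i => ε k ω i - (∑ j, ε k ω j)/m) with hvdef
    have hsplit : Δ k ω = mulVecE (W k ω) (Δ n ω) + v := by
      ext i
      show Δ k ω i = (∑ j, W k ω i j * Δ n ω j) + (ε k ω i - (∑ j, ε k ω j)/m)
      have hsum : ∑ j, θ k ω j = (∑ j, θ n ω j) + ∑ j, ε k ω j := by
        calc ∑ j, θ k ω j = ∑ j, ((∑ l, W k ω j l * θ n ω l) + ε k ω j) :=
              Finset.sum_congr rfl fun j _ => hrec k hk ω j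
          _ = (∑ j, ∑ l, W k ω j l * θ n ω l) + ∑ j, ε k ω j := Finset.sum_add_distrib
          _ = (∑ l, (∑ j, W k ω j l) * θ n ω l) + ∑ j, ε k ω j := by
              rw [Finset.sum_comm]
              simp [Finset.sum_mul]
          _ = (∑ l, θ n ω l) + ∑ j, ε k ω j := by simp [hW_col k ω]
      have hmul : ∑ j, W k ω i j * Δ n ω j
          = (∑ j, W k ω i j * θ n ω j) - (∑ l, θ n ω l)/m := by
        calc ∑ j, W k ω i j * Δ n ω j
            = ∑ j, (W k ω i j * θ n ω j - W k ω i j * ((∑ l, θ n ω l)/m)) :=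
              Finset.sum_congr rfl fun j _ => by rw [hΔ n ω j]; ring
          _ = (∑ j, W k ω i j * θ n ω j) - (∑ j, W k ω i j) * ((∑ l, θ n ω l)/m) := by
              rw [Finset.sum_sub_distrib, ← Finset.sum_mul]
          _ = (∑ j, W k ω i j * θ n ω j) - (∑ l, θ n ω l)/m := by
              rw [hW_row k ω i]; ring
      rw [hΔ k ω i, hrec k hk ω i, hsum, hmul]
      ring
    calc ‖Δ k ω‖ = ‖mulVecE (W k ω) (Δ n ω) + v‖ := by rw [hsplit]
      _ ≤ ‖mulVecE (W k ω) (Δ n ω)‖ + ‖v‖ := norm_add_le _ _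
      _ ≤ q ω + e ω := by
          apply add_le_add
          · exact le_of_eq (hΦeq ω (Δ n ω)).symm
          · exact proj_bound hm (ε k ω) v (fun i => rfl)
  -- mean of the matrix entries
  have hWk_entry_meas : ∀ (κ : ℕ) i j, Measurable fun ω => W κ ω i j := by
    intro κ i j
    exact (measurable_pi_apply j).comp ((measurable_pi_apply i).comp (hW_meas κ))
  have hWk_entry_int : ∀ (κ : ℕ) i j, Integrable (fun ω => W κ ω i j) μ := by
    intro κ i j
    refine Integrable.mono' (integrable_const 1) (hWk_entry_meas κ i j).aestronglyMeasurable
      (ae_of_all _ fun ω => ?_)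
    rw [Real.norm_eq_abs, abs_of_nonneg (hW_nonneg κ ω i j)]
    calc W κ ω i j ≤ ∑ j', W κ ω i j' :=
          Finset.single_le_sum (fun j' _ => hW_nonneg κ ω i j') (Finset.mem_univ j)
      _ = 1 := hW_row κ ω i
  have hEnt : ∀ i j, ∫ ω, W k ω i j ∂μ = Wbar i j := by
    intro i j
    have hevalm : Measurable fun w : Fin m → Fin m → ℝ => w i j :=
      (measurable_pi_apply j).comp (measurable_pi_apply i)
    calc ∫ ω, W k ω i j ∂μ = ∫ w, w i j ∂(μ.map X) :=
          (integral_map hXmeas.aemeasurable hevalm.aestronglyMeasurable).symm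
      _ = ∫ w, w i j ∂(μ.map (fun ω => (fun i j => W 1 ω i j : Fin m → Fin m → ℝ))) := by
          rw [hXdef, hW_id k hk]
      _ = ∫ ω, W 1 ω i j ∂μ :=
          integral_map (hW_meas 1).aemeasurable hevalm.aestronglyMeasurable
      _ = Wbar i j := (hWbar i j).symm
  -- Wbar is symmetric with unit column sums
  have hWbar_symm : Wbar.IsSymm := by
    show Wbarᵀ = Wbar
    ext i j
    rw [Matrix.transpose_apply, hWbar, hWbar]
    congr 1
    funext ω
    exact congrFun (congrFun (hW_symm 1 ω) i) j
  have hWbar_col : ∀ j, ∑ i, Wbar i j = 1 := by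
    intro j
    have : ∑ i, Wbar i j = ∫ ω, (∑ i, W 1 ω i j) ∂μ := by
      rw [integral_finset_sum _ (fun i _ => hWk_entry_int 1 i j)]
      exact Finset.sum_congr rfl fun i _ => hWbar i j
    rw [this]
    simp only [hW_col 1]
    simp
  -- quadratic form identity
  have hquad : ∀ y : Fin m → ℝ, ∫ ω, (∑ i, ((W k ω).mulVec y i)^2) ∂μ
      = ∑ i, y i * Wbar.mulVec y i := by
    intro y
    have hpt : ∀ ω, (∑ i, ((W k ω).mulVec y i)^2) = ∑ i, ∑ j, y i * y j * W k ω i j := by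
      intro ω
      rw [quad_id (W k ω) (hW_symm k ω) (hW_idem k ω) y]
      simp only [dotProduct, Matrix.mulVec, Finset.mul_sum]
      exact Finset.sum_congr rfl fun i _ => Finset.sum_congr rfl fun j _ => by ring
    calc ∫ ω, (∑ i, ((W k ω).mulVec y i)^2) ∂μ
        = ∫ ω, (∑ i, ∑ j, y i * y j * W k ω i j) ∂μ := by
          congr 1; funext ω; exact hpt ω
      _ = ∑ i, ∑ j, y i * y j * Wbar i j := by
          rw [integral_finset_sum _ (fun i _ => integrable_finset_sum _
            (fun j _ => (hWk_entry_int k i j).const_mul _))]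
          refine Finset.sum_congr rfl fun i _ => ?_
          rw [integral_finset_sum _ (fun j _ => (hWk_entry_int k i j).const_mul _)]
          refine Finset.sum_congr rfl fun j _ => ?_
          rw [integral_const_mul, hEnt i j]
      _ = ∑ i, y i * Wbar.mulVec y i := by
          refine Finset.sum_congr rfl fun i _ => ?_
          simp only [Matrix.mulVec, dotProduct, Finset.mul_sum]
          exact Finset.sum_congr rfl fun j _ => by ring
  -- λ is nonnegative
  have hlam0 : 0 ≤ lam := by
    obtain ⟨y₀, hy0ne, hy0sum, hy0eig⟩ := hlam.1
    have h1 : ∫ ω, (∑ i, ((W k ω).mulVec y₀ i)^2) ∂μ = lam * ∑ i, y₀ i ^2 := by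
      rw [hquad y₀, hy0eig]
      simp only [Pi.smul_apply, smul_eq_mul]
      rw [Finset.mul_sum]
      exact Finset.sum_congr rfl fun i _ => by ring
    have h2 : 0 ≤ lam * ∑ i, y₀ i ^2 := by
      rw [← h1]
      exact integral_nonneg fun ω => Finset.sum_nonneg fun i _ => sq_nonneg _
    have h3 : 0 < ∑ i, y₀ i ^2 := by
      obtain ⟨i, hi⟩ := Function.ne_iff.mp hy0ne
      exact Finset.sum_pos' (fun i _ => sq_nonneg _) ⟨i, Finset.mem_univ i, lt_of_le_of_ne (sq_nonneg _) (Ne.symm (pow_ne_zero 2 hi))⟩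
    nlinarith
  -- the key bound on ψ
  have hψle : ∀ y : EuclideanSpace ℝ (Fin m), (∑ i, y i = 0) →
      (∫ x, Φ x y ∂(μ.map X)) ≤ Real.sqrt lam * ‖y‖ := by
    intro y hy
    have hGpair : Measurable fun ω => (X ω, y) := hXmeas.prodMk measurable_const
    have hGc : (fun ω => Φ (X ω) y) = Function.uncurry Φ ∘ (fun ω => (X ω, y)) := rfl
    have hGmeas : Measurable fun ω => Φ (X ω) y := hGc ▸ hΦmeas.comp hGpair
    have hΦymeas : Measurable fun x => Φ x y := by
      have h0 : Measurable fun x : Fin m → Fin m → ℝ => (x, y) :=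
        measurable_id.prodMk measurable_const
      have hc : (fun x => Φ x y) = Function.uncurry Φ ∘ (fun x : Fin m → Fin m → ℝ => (x, y)) := rfl
      exact hc ▸ hΦmeas.comp h0
    have hstep : ∫ x, Φ x y ∂(μ.map X) = ∫ ω, Φ (X ω) y ∂μ := by
      apply integral_map hXmeas.aemeasurable
      exact hΦymeas.aestronglyMeasurable
    set G : Ω → ℝ := fun ω => ‖mulVecE (W k ω) y‖ with hGdef
    have hGeq : (fun ω => Φ (X ω) y) = G := funext fun ω => hΦeq ω y
    have hG_meas : Measurable G := by rw [← hGeq]; exact hGmeas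
    have hG_nonneg : ∀ ω, 0 ≤ G ω := fun ω => norm_nonneg _
    have hG_bd : ∀ ω, G ω ≤ ‖y‖ := fun ω =>
      mulVec_contract (W k ω) (hW_symm k ω) (hW_idem k ω) y
    have hG_int : Integrable G μ :=
      Integrable.mono' (integrable_const ‖y‖) hG_meas.aestronglyMeasurable
        (ae_of_all _ fun ω => by
          rw [Real.norm_eq_abs, abs_of_nonneg (hG_nonneg ω)]; exact hG_bd ω)
    have hG2_int : Integrable (fun ω => G ω^2) μ :=
      Integrable.mono' (integrable_const (‖y‖^2)) (hG_meas.pow_const 2).aestronglyMeasurable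
        (ae_of_all _ fun ω => by
          rw [Real.norm_eq_abs, abs_of_nonneg (sq_nonneg _)]
          exact pow_le_pow_left₀ (hG_nonneg ω) (hG_bd ω) 2)
    set c : ℝ := ∫ ω, G ω ∂μ with hcdef
    have hc_nonneg : 0 ≤ c := integral_nonneg hG_nonneg
    -- Cauchy–Schwarz: c² ≤ ∫ G²
    have hvar : ∫ ω, (G ω - c)^2 ∂μ = (∫ ω, G ω^2 ∂μ) - c^2 := by
      have hexp : (fun ω => (G ω - c)^2) = fun ω => (G ω^2 - (2*c) * G ω) + c^2 :=
        funext fun ω => by ring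
      have hint1 : Integrable (fun ω => (2*c) * G ω) μ := hG_int.const_mul _
      have hint2 : Integrable (fun ω => G ω^2 - (2*c) * G ω) μ := hG2_int.sub hint1
      rw [hexp, integral_add hint2 (integrable_const _), integral_sub hG2_int hint1,
        integral_const_mul, integral_const]
      simp only [probReal_univ, measure_univ, ENNReal.toReal_one, one_smul, smul_eq_mul, one_mul]
      rw [← hcdef]
      ring
    have hcs : c^2 ≤ ∫ ω, G ω^2 ∂μ := by
      have h0 : 0 ≤ ∫ ω, (G ω - c)^2 ∂μ := integral_nonneg fun ω => sq_nonneg _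
      linarith [hvar]
    -- quadratic form bound
    have hG2_eq : ∫ ω, G ω^2 ∂μ = ∑ i, y i * Wbar.mulVec y i := by
      rw [← hquad y]
      congr 1
      funext ω
      rw [hGdef]
      rw [normE_sq]
      rfl
    have hray : ∑ i, y i * Wbar.mulVec y i ≤ lam * ‖y‖^2 :=
      rayleigh_bound Wbar hWbar_symm hWbar_col lam (fun t ht => hlam.2 ht) y hy
    have hc2 : c^2 ≤ lam * ‖y‖^2 := by
      rw [hG2_eq] at hcs
      linarith
    have : c ≤ Real.sqrt (lam * ‖y‖^2) :=
      (Real.le_sqrt hc_nonneg (by positivity)).mpr hc2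
    calc ∫ x, Φ x y ∂(μ.map X) = c := by rw [hstep, hGeq]
      _ ≤ Real.sqrt (lam * ‖y‖^2) := this
      _ = Real.sqrt lam * ‖y‖ := by
          rw [Real.sqrt_mul hlam0, Real.sqrt_sq (norm_nonneg y)]
  -- conditional expectation steps
  have hcond1 : μ[(fun ω' => ‖Δ k ω'‖) | F n] ≤ᵐ[μ] μ[q + e | F n] :=
    condExp_mono (hΔint k) (hq_int.add (hε_int k)) (ae_of_all _ fun ω => hdecomp ω)
  have hcond2 : μ[q + e | F n] =ᵐ[μ] μ[q | F n] + μ[e | F n] :=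
    condExp_add hq_int (hε_int k) (F n)
  have hfreeze : μ[q | F n] =ᵐ[μ] fun ω => ∫ x, Φ x (Δ n ω) ∂(μ.map X) :=
    freezing (F.le n) μ X hXmeas (Δ n) (hΔmeas n) (hW_indep k hk) Φ hΦmeas
      (fun y => ‖y‖) hΦbd (hΔint n)
  filter_upwards [hcond1, hcond2, hfreeze] with ω h1 h2 h3
  calc (μ[(fun ω' => ‖Δ k ω'‖) | F n]) ω ≤ (μ[q + e | F n]) ω := h1
    _ = (μ[q | F n]) ω + (μ[e | F n]) ω := by rw [h2]; rfl
    _ ≤ Real.sqrt lam * ‖Δ n ω‖ + (μ[e | F n]) ω := by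
        apply add_le_add_left
        rw [h3]
        exact hψle (Δ n ω) (hΔsum n ω)
end

section
/- Let X ⊆ ℝ^d be a nonempty closed convex set, let v_1,…,v_m ∈ ℝ^d, set z_i = Π_X[v_i] for each i, and let z̄ = (1/m)Σ_{ℓ=1}^m z_ℓ and v̄ = (1/m)Σ_{ℓ=1}^m v_ℓ. Then Σ_{i=1}^m ‖z_i − z̄‖ ≤ 2·Σ_{i=1}^m ‖v_i − v̄‖. -/
open Metric

/-- Let `X ⊆ ℝ^d` be nonempty, closed and convex, `z_i = Π_X[v_i]`,
`z̄ = (1/m)∑ z_ℓ` and `v̄ = (1/m)∑ v_ℓ`. Then `∑_i ‖z_i − z̄‖ ≤ 2 ∑_i ‖v_i − v̄‖`. -/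
theorem sum_dist_proj_avg_le
    {d m : ℕ} (hm : 0 < m)
    (X : Set (EuclideanSpace ℝ (Fin d)))
    (hX_ne : X.Nonempty) (hX_closed : IsClosed X) (hX_convex : Convex ℝ X)
    (v z : Fin m → EuclideanSpace ℝ (Fin d))
    -- `z i = Π_X[v i]`, characterized as the closest point of `X`
    (hz_mem : ∀ i, z i ∈ X)
    (hz_proj : ∀ i, ∀ w ∈ X, dist (v i) (z i) ≤ dist (v i) w) :
    ∑ i, ‖z i - (m : ℝ)⁻¹ • ∑ ℓ, z ℓ‖ ≤ 2 * ∑ i, ‖v i - (m : ℝ)⁻¹ • ∑ ℓ, v ℓ‖ := by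
  have hms : (m : ℝ) ≠ 0 := Nat.cast_ne_zero.mpr hm.ne'
  have hinner : ∀ i, ∀ w ∈ X, (inner ℝ (v i - z i) (w - z i) : ℝ) ≤ 0 := by
    intro i
    haveI : Nonempty X := hX_ne.to_subtype
    have hbdd : BddBelow (Set.range fun w : X => ‖v i - (w : EuclideanSpace ℝ (Fin d))‖) := by
      refine ⟨0, ?_⟩
      rintro x ⟨w, rfl⟩
      positivity
    have heq : ‖v i - z i‖ = ⨅ w : X, ‖v i - w‖ := by
      apply le_antisymm
      · apply le_ciInf; intro w
        simpa [dist_eq_norm] using hz_proj i w w.2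
      · exact ciInf_le hbdd ⟨z i, hz_mem i⟩
    exact (norm_eq_iInf_iff_real_inner_le_zero hX_convex (hz_mem i)).mp heq
  have key : ∀ i j, ‖z i - z j‖ ≤ ‖v i - v j‖ := by
    intro i j
    have hA := hinner i (z j) (hz_mem j)
    have hB := hinner j (z i) (hz_mem i)
    have hA' : (inner ℝ (v i - z i) (z i - z j) : ℝ)
        = -(inner ℝ (v i - z i) (z j - z i) : ℝ) := by
      rw [← inner_neg_right]; congr 1; abel
    have h3 : (0:ℝ) ≤ inner ℝ ((v i - z i) - (v j - z j)) (z i - z j) := by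
      rw [inner_sub_left, hA']; linarith
    have h4 : ‖z i - z j‖ ^ 2 ≤ (inner ℝ (v i - v j) (z i - z j) : ℝ) := by
      have hdecomp : v i - v j = (z i - z j) + ((v i - z i) - (v j - z j)) := by abel
      rw [hdecomp, inner_add_left, real_inner_self_eq_norm_sq]
      linarith
    have hCS : (inner ℝ (v i - v j) (z i - z j) : ℝ) ≤ ‖v i - v j‖ * ‖z i - z j‖ :=
      real_inner_le_norm _ _
    by_cases h : z i = z j
    · simp [h]
    · have hpos : 0 < ‖z i - z j‖ := by
        rw [norm_pos_iff]; exact sub_ne_zero.mpr h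
      nlinarith
  set vb := (m : ℝ)⁻¹ • ∑ ℓ, v ℓ with hvb
  have step1 : ∀ i, ‖z i - (m : ℝ)⁻¹ • ∑ ℓ, z ℓ‖
      ≤ (m : ℝ)⁻¹ * ∑ ℓ, ‖v i - v ℓ‖ := by
    intro i
    have hrw : z i - (m : ℝ)⁻¹ • ∑ ℓ, z ℓ = (m : ℝ)⁻¹ • ∑ ℓ, (z i - z ℓ) := by
      rw [Finset.sum_sub_distrib, smul_sub, Finset.sum_const, Finset.card_univ,
        Fintype.card_fin]
      congr 1
      rw [← Nat.cast_smul_eq_nsmul ℝ, smul_smul, inv_mul_cancel₀ hms, one_smul]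
    rw [hrw, norm_smul, norm_inv, Real.norm_natCast]
    apply mul_le_mul_of_nonneg_left _ (by positivity)
    calc ‖∑ ℓ, (z i - z ℓ)‖ ≤ ∑ ℓ, ‖z i - z ℓ‖ := norm_sum_le _ _
      _ ≤ ∑ ℓ, ‖v i - v ℓ‖ := Finset.sum_le_sum fun ℓ _ => key i ℓ
  have step2 : ∀ i, (m : ℝ)⁻¹ * ∑ ℓ, ‖v i - v ℓ‖
      ≤ ‖v i - vb‖ + (m : ℝ)⁻¹ * ∑ ℓ, ‖v ℓ - vb‖ := by
    intro i
    have h5 : ∑ ℓ, ‖v i - v ℓ‖ ≤ ∑ ℓ : Fin m, (‖v i - vb‖ + ‖v ℓ - vb‖) := by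
      apply Finset.sum_le_sum; intro ℓ _
      calc ‖v i - v ℓ‖ = ‖(v i - vb) - (v ℓ - vb)‖ := by congr 1; abel
        _ ≤ ‖v i - vb‖ + ‖v ℓ - vb‖ := norm_sub_le _ _
    rw [Finset.sum_add_distrib, Finset.sum_const, Finset.card_univ, Fintype.card_fin,
      nsmul_eq_mul] at h5
    have := mul_le_mul_of_nonneg_left h5 (by positivity : (0:ℝ) ≤ (m:ℝ)⁻¹)
    calc (m : ℝ)⁻¹ * ∑ ℓ, ‖v i - v ℓ‖
        ≤ (m : ℝ)⁻¹ * ((m:ℝ) * ‖v i - vb‖ + ∑ ℓ, ‖v ℓ - vb‖) := this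
      _ = ‖v i - vb‖ + (m : ℝ)⁻¹ * ∑ ℓ, ‖v ℓ - vb‖ := by
          field_simp
  calc ∑ i, ‖z i - (m : ℝ)⁻¹ • ∑ ℓ, z ℓ‖
      ≤ ∑ i : Fin m, (‖v i - vb‖ + (m : ℝ)⁻¹ * ∑ ℓ, ‖v ℓ - vb‖) :=
        Finset.sum_le_sum fun i _ => (step1 i).trans (step2 i)
    _ = 2 * ∑ i, ‖v i - vb‖ := by
        rw [Finset.sum_add_distrib, Finset.sum_const, Finset.card_univ, Fintype.card_fin,
          nsmul_eq_mul]
        field_simp; ring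
end

section
/- Let X ⊆ ℝ^d be a nonempty closed convex set, let f_1,…,f_m:ℝ^d→ℝ be convex differentiable functions with ‖∇f_i(x)‖ ≤ G_f for all x ∈ X and all i, and set f = Σ_{i=1}^m f_i. Let v_1,…,v_m ∈ ℝ^d, z_i = Π_X[v_i], z̄ = (1/m)Σ_{ℓ=1}^m z_ℓ and v̄ = (1/m)Σ_{ℓ=1}^m v_ℓ. Then for every x̌ ∈ X: Σ_{i=1}^m (f_i(z_i) − f_i(x̌)) ≥ −2G_f·Σ_{i=1}^m ‖v_i − v̄‖ + (f(z̄) − f(x̌)). -/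
open Metric RealInnerProductSpace InnerProductSpace

/-- Gradient inequality for a convex differentiable function. -/
lemma grad_ineq_s16 {E : Type*} [NormedAddCommGroup E] [InnerProductSpace ℝ E] [CompleteSpace E]
    {f : E → ℝ} {g y : E} (hf : ConvexOn ℝ Set.univ f) (hg : HasGradientAt f g y)
    (x : E) : f y + ⟪g, x - y⟫_ℝ ≤ f x := by
  set u := x - y with hu
  have line : HasDerivAt (fun t : ℝ => y + t • u) u 0 := by
    simpa using ((hasDerivAt_id (0 : ℝ)).smul_const u).const_add y
  have hφ : HasDerivAt (fun t : ℝ => f (y + t • u)) ⟪g, u⟫_ℝ 0 := by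
    have h1 : HasFDerivAt f (InnerProductSpace.toDual ℝ E g) ((fun t : ℝ => y + t • u) 0) := by
      simpa using hg.hasFDerivAt
    exact (h1.comp_hasDerivAt 0 line).congr_deriv (by simp)
  have hslope : Filter.Tendsto (slope (fun t : ℝ => f (y + t • u)) 0) (nhdsWithin 0 (Set.Ioi 0))
      (nhds ⟪g, u⟫_ℝ) :=
    (hasDerivAt_iff_tendsto_slope.mp hφ).mono_left
      (nhdsWithin_mono _ (fun t ht => ne_of_gt ht))
  have hle : ⟪g, u⟫_ℝ ≤ f x - f y := by
    refine le_of_tendsto hslope ?_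
    filter_upwards [Ioc_mem_nhdsGT_of_mem (Set.left_mem_Ico.mpr one_pos)] with t ht
    have ht0 : (0 : ℝ) < t := ht.1
    have ht1 : t ≤ 1 := ht.2
    have hconv := hf.2 (Set.mem_univ y) (Set.mem_univ x) (by linarith : (0:ℝ) ≤ 1 - t)
      (le_of_lt ht0) (by ring)
    have heq : y + t • u = (1 - t) • y + t • x := by
      rw [hu]; module
    have hval : f (y + t • u) ≤ (1 - t) * f y + t * f x := by rw [heq]; simpa using hconv
    have : slope (fun t : ℝ => f (y + t • u)) 0 t = (f (y + t • u) - f y) / t := by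
      simp [slope_def_field, div_eq_div_iff]
    rw [this, div_le_iff₀ ht0]
    nlinarith
  linarith

/-- Let `X ⊆ ℝ^d` be nonempty closed convex, `f_i` convex differentiable with
`‖∇f_i‖ ≤ G_f` on `X`, `f = ∑ f_i`, `z_i = Π_X[v_i]`, `z̄ = (1/m)∑ z_ℓ`,
`v̄ = (1/m)∑ v_ℓ`. Then for every `x̌ ∈ X`:
`∑_i (f_i(z_i) − f_i(x̌)) ≥ −2G_f ∑_i ‖v_i − v̄‖ + (f(z̄) − f(x̌))`. -/
theorem sum_f_proj_lower_bound
    {d m : ℕ} (hm : 0 < m)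
    (X : Set (EuclideanSpace ℝ (Fin d)))
    (hX_ne : X.Nonempty) (hX_closed : IsClosed X) (hX_convex : Convex ℝ X)
    (f : Fin m → EuclideanSpace ℝ (Fin d) → ℝ)
    (g : Fin m → EuclideanSpace ℝ (Fin d) → EuclideanSpace ℝ (Fin d))
    (hf_convex : ∀ i, ConvexOn ℝ Set.univ (f i))
    (hf_grad : ∀ i w, HasGradientAt (f i) (g i w) w)
    (Gf : ℝ) (hGf : ∀ i, ∀ w ∈ X, ‖g i w‖ ≤ Gf)
    (v z : Fin m → EuclideanSpace ℝ (Fin d))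
    -- `z i = Π_X[v i]`, characterized as the closest point of `X`
    (hz_mem : ∀ i, z i ∈ X)
    (hz_proj : ∀ i, ∀ w ∈ X, dist (v i) (z i) ≤ dist (v i) w) :
    ∀ xc ∈ X,
      -2 * Gf * ∑ i, ‖v i - (m : ℝ)⁻¹ • ∑ ℓ, v ℓ‖
        + ((∑ i, f i ((m : ℝ)⁻¹ • ∑ ℓ, z ℓ)) - ∑ i, f i xc) ≤
      ∑ i, (f i (z i) - f i xc) := by
  intro xc hxc
  have hn : (0:ℝ) < (m:ℝ) := by exact_mod_cast hm
  set zb : EuclideanSpace ℝ (Fin d) := (m:ℝ)⁻¹ • ∑ ℓ, z ℓ with hzb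
  set vb : EuclideanSpace ℝ (Fin d) := (m:ℝ)⁻¹ • ∑ ℓ, v ℓ with hvb
  -- z̄ ∈ X
  have hzb_mem : zb ∈ X := by
    rw [hzb, Finset.smul_sum]
    exact hX_convex.sum_mem (fun i _ => by positivity)
      (by simp [Finset.sum_const, Finset.card_univ]; field_simp)
      (fun i _ => hz_mem i)
  -- variational characterization of projection
  have hvar : ∀ i, ∀ w ∈ X, ⟪v i - z i, w - z i⟫ ≤ 0 := by
    intro i
    have : Nonempty X := ⟨⟨z i, hz_mem i⟩⟩
    have heq : ‖v i - z i‖ = ⨅ w : X, ‖v i - w‖ := by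
      apply le_antisymm
      · exact le_ciInf fun w => by simpa [dist_eq_norm] using hz_proj i w w.2
      · exact ciInf_le ⟨0, fun b hb => by rcases hb with ⟨w, rfl⟩; positivity⟩
          (⟨z i, hz_mem i⟩ : X)
    exact (norm_eq_iInf_iff_real_inner_le_zero hX_convex (hz_mem i)).mp heq
  -- projection is nonexpansive
  have hnonexp : ∀ i ℓ, ‖z i - z ℓ‖ ≤ ‖v i - v ℓ‖ := by
    intro i ℓ
    have h1' : 0 ≤ ⟪v i - z i, z i - z ℓ⟫ := by
      have h := hvar i (z ℓ) (hz_mem ℓ)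
      rw [show z ℓ - z i = -(z i - z ℓ) by abel, inner_neg_right] at h
      linarith
    have h2' := hvar ℓ (z i) (hz_mem i)
    have key : ‖z i - z ℓ‖^2 ≤ ‖v i - v ℓ‖ * ‖z i - z ℓ‖ := by
      have hin : ⟪z i - z ℓ, z i - z ℓ⟫ ≤ ⟪v i - v ℓ, z i - z ℓ⟫ := by
        have expand : ⟪v i - v ℓ, z i - z ℓ⟫
            = ⟪v i - z i, z i - z ℓ⟫ - ⟪v ℓ - z ℓ, z i - z ℓ⟫
              + ⟪z i - z ℓ, z i - z ℓ⟫ := by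
          rw [show v i - v ℓ = (v i - z i) - (v ℓ - z ℓ) + (z i - z ℓ) by abel,
            inner_add_left, inner_sub_left]
        linarith
      calc ‖z i - z ℓ‖^2 = ⟪z i - z ℓ, z i - z ℓ⟫ := (real_inner_self_eq_norm_sq _).symm
        _ ≤ ⟪v i - v ℓ, z i - z ℓ⟫ := hin
        _ ≤ ‖v i - v ℓ‖ * ‖z i - z ℓ‖ := real_inner_le_norm _ _
    rcases eq_or_lt_of_le (norm_nonneg (z i - z ℓ)) with h0 | h0
    · rw [← h0]; exact norm_nonneg _
    · exact le_of_mul_le_mul_right (by nlinarith) h0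
  -- bound on ‖z i - z̄‖
  have hdiff : ∀ i, z i - zb = ∑ ℓ, (m:ℝ)⁻¹ • (z i - z ℓ) := by
    intro i
    rw [← Finset.smul_sum, Finset.sum_sub_distrib, Finset.sum_const, Finset.card_univ,
      Fintype.card_fin, smul_sub, hzb]
    congr 1
    rw [← Nat.cast_smul_eq_nsmul ℝ, smul_smul, inv_mul_cancel₀ (ne_of_gt hn), one_smul]
  have hzbound : ∀ i, ‖z i - zb‖ ≤ ‖v i - vb‖ + (m:ℝ)⁻¹ * ∑ ℓ, ‖v ℓ - vb‖ := by
    intro i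
    calc ‖z i - zb‖ = ‖∑ ℓ, (m:ℝ)⁻¹ • (z i - z ℓ)‖ := by rw [hdiff]
      _ ≤ ∑ ℓ, ‖(m:ℝ)⁻¹ • (z i - z ℓ)‖ := norm_sum_le _ _
      _ = ∑ ℓ, (m:ℝ)⁻¹ * ‖z i - z ℓ‖ := by
          refine Finset.sum_congr rfl fun ℓ _ => ?_
          rw [norm_smul, Real.norm_eq_abs, abs_of_pos (by positivity)]
      _ ≤ ∑ ℓ, (m:ℝ)⁻¹ * (‖v i - vb‖ + ‖v ℓ - vb‖) := by
          refine Finset.sum_le_sum fun ℓ _ => ?_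
          refine mul_le_mul_of_nonneg_left ?_ (by positivity)
          calc ‖z i - z ℓ‖ ≤ ‖v i - v ℓ‖ := hnonexp i ℓ
            _ = ‖(v i - vb) - (v ℓ - vb)‖ := by congr 1; abel
            _ ≤ ‖v i - vb‖ + ‖v ℓ - vb‖ := norm_sub_le _ _
      _ = ‖v i - vb‖ + (m:ℝ)⁻¹ * ∑ ℓ, ‖v ℓ - vb‖ := by
          rw [← Finset.mul_sum, Finset.sum_add_distrib, Finset.sum_const, Finset.card_univ,
            Fintype.card_fin, nsmul_eq_mul, mul_add, ← mul_assoc,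
            inv_mul_cancel₀ (ne_of_gt hn), one_mul]
  have hsum_z : ∑ i, ‖z i - zb‖ ≤ 2 * ∑ i, ‖v i - vb‖ := by
    calc ∑ i, ‖z i - zb‖ ≤ ∑ i, (‖v i - vb‖ + (m:ℝ)⁻¹ * ∑ ℓ, ‖v ℓ - vb‖) :=
          Finset.sum_le_sum fun i _ => hzbound i
      _ = ∑ i, ‖v i - vb‖ + (m:ℝ) * ((m:ℝ)⁻¹ * ∑ ℓ, ‖v ℓ - vb‖) := by
          rw [Finset.sum_add_distrib, Finset.sum_const, Finset.card_univ, Fintype.card_fin,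
            nsmul_eq_mul]
      _ = 2 * ∑ i, ‖v i - vb‖ := by
          rw [← mul_assoc, mul_inv_cancel₀ (ne_of_gt hn)]; ring
  -- Gf ≥ 0
  have hGf0 : 0 ≤ Gf := le_trans (norm_nonneg _) (hGf ⟨0, hm⟩ zb hzb_mem)
  -- gradient inequality per index
  have hgrad_i : ∀ i, -Gf * ‖z i - zb‖ ≤ f i (z i) - f i zb := by
    intro i
    have h1 := grad_ineq_s16 (hf_convex i) (hf_grad i zb) (z i)
    have h2 : -(‖g i zb‖ * ‖z i - zb‖) ≤ ⟪g i zb, z i - zb⟫ := by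
      have ha := abs_real_inner_le_norm (g i zb) (z i - zb)
      have hb := neg_abs_le (⟪g i zb, z i - zb⟫)
      linarith [abs_nonneg (⟪g i zb, z i - zb⟫)]
    have h3 : ‖g i zb‖ * ‖z i - zb‖ ≤ Gf * ‖z i - zb‖ :=
      mul_le_mul_of_nonneg_right (hGf i zb hzb_mem) (norm_nonneg _)
    nlinarith
  -- combine
  have hkey : -Gf * ∑ i, ‖z i - zb‖ ≤ ∑ i, (f i (z i) - f i zb) := by
    calc -Gf * ∑ i, ‖z i - zb‖ = ∑ i, -Gf * ‖z i - zb‖ := by rw [Finset.mul_sum]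
      _ ≤ ∑ i, (f i (z i) - f i zb) := Finset.sum_le_sum fun i _ => hgrad_i i
  have e1 : ∑ i, (f i (z i) - f i zb) = ∑ i, (f i (z i) - f i xc) - (∑ i, f i zb - ∑ i, f i xc) := by
    rw [Finset.sum_sub_distrib, Finset.sum_sub_distrib]; ring
  have e2 : -Gf * ∑ i, ‖z i - zb‖ ≥ -2 * Gf * ∑ i, ‖v i - vb‖ := by
    have := mul_le_mul_of_nonneg_left hsum_z hGf0
    linarith
  linarith [hkey, e2]
end

section
/- (Deviation of a projected gradient step.) Let X ⊆ Y ⊆ ℝ^d with X nonempty, closed and convex and Y closed and convex. Let f:ℝ^d→ℝ be convex and differentiable with L-Lipschitz gradient on ℝ^d, and suppose ‖∇f(z)‖ ≤ G_f for all z ∈ X. Then for every v ∈ ℝ^d and every α > 0: ‖Π_Y[v − α∇f(v)] − v‖ ≤ (2 + αL)·dist(v, X) + α·G_f. -/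
open Metric

set_option maxHeartbeats 1000000

/-- **Deviation of a projected gradient step.**
Let `X ⊆ Y ⊆ ℝ^d`, `X` nonempty closed convex, `Y` closed convex, `f` convex
differentiable with `L`-Lipschitz gradient and `‖∇f‖ ≤ G_f` on `X`. Then for every
`v` and `α > 0`: `‖Π_Y[v − α∇f(v)] − v‖ ≤ (2 + αL)·dist(v,X) + α·G_f`. -/
theorem projected_gradient_step_deviation
    {d : ℕ} (X Y : Set (EuclideanSpace ℝ (Fin d)))
    (hXY : X ⊆ Y)
    (hX_ne : X.Nonempty) (hX_closed : IsClosed X) (hX_convex : Convex ℝ X)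
    (hY_closed : IsClosed Y) (hY_convex : Convex ℝ Y)
    (f : EuclideanSpace ℝ (Fin d) → ℝ)
    (g : EuclideanSpace ℝ (Fin d) → EuclideanSpace ℝ (Fin d))
    (hf_convex : ConvexOn ℝ Set.univ f)
    (hf_grad : ∀ w, HasGradientAt f (g w) w)
    (L : ℝ) (hL : 0 ≤ L)
    (hlip : ∀ w w', ‖g w - g w'‖ ≤ L * ‖w - w'‖)
    (Gf : ℝ) (hGf : ∀ w ∈ X, ‖g w‖ ≤ Gf)
    (v : EuclideanSpace ℝ (Fin d)) (α : ℝ) (hα : 0 < α)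
    (p : EuclideanSpace ℝ (Fin d))
    -- `p = Π_Y[v − α∇f(v)]`, characterized as the closest point of `Y`
    (hp_mem : p ∈ Y)
    (hp_proj : ∀ w ∈ Y, dist (v - α • g v) p ≤ dist (v - α • g v) w) :
    ‖p - v‖ ≤ (2 + α * L) * infDist v X + α * Gf := by
  obtain ⟨x, hxX, hx_dist⟩ := hX_closed.exists_infDist_eq_dist hX_ne v
  set u := v - α • g v with hu
  -- projection characterization: variational inequality
  haveI : Nonempty ↥Y := ⟨⟨p, hp_mem⟩⟩
  have h1 : ∀ w : Y, ‖u - p‖ ≤ ‖u - (w : EuclideanSpace ℝ (Fin d))‖ := fun w => by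
    simpa [dist_eq_norm] using hp_proj w w.2
  have hbdd : BddBelow (Set.range fun w : Y => ‖u - (w : EuclideanSpace ℝ (Fin d))‖) :=
    ⟨0, by rintro r ⟨w, rfl⟩; exact norm_nonneg _⟩
  have hinf : ‖u - p‖ = ⨅ w : Y, ‖u - w‖ :=
    le_antisymm (le_ciInf h1) (ciInf_le hbdd ⟨p, hp_mem⟩)
  have hVI := (norm_eq_iInf_iff_real_inner_le_zero hY_convex hp_mem).mp hinf x (hXY hxX)
  have h2 : (0:ℝ) ≤ inner ℝ (u - p) (p - x) := by
    have : p - x = -(x - p) := by abel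
    rw [this, inner_neg_right]
    linarith
  have hux : u - x = (u - p) + (p - x) := by abel
  have key : ‖p - x‖ ≤ ‖u - x‖ := by
    have hsq := norm_add_sq_real (u - p) (p - x)
    rw [← hux] at hsq
    nlinarith [norm_nonneg (u - p), norm_nonneg (p - x), norm_nonneg (u - x)]
  have hvx : ‖v - x‖ = infDist v X := by rw [hx_dist, dist_eq_norm]
  have hux2 : ‖u - x‖ ≤ ‖v - x‖ + α * ‖g v‖ := by
    have : u - x = (v - x) - α • g v := by rw [hu]; abel
    rw [this]
    calc ‖(v - x) - α • g v‖ ≤ ‖v - x‖ + ‖α • g v‖ := norm_sub_le _ _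
      _ = ‖v - x‖ + α * ‖g v‖ := by rw [norm_smul, Real.norm_of_nonneg hα.le]
  have hgv : ‖g v‖ ≤ Gf + L * ‖v - x‖ := by
    calc ‖g v‖ = ‖g x + (g v - g x)‖ := by congr 1; abel
      _ ≤ ‖g x‖ + ‖g v - g x‖ := norm_add_le _ _
      _ ≤ Gf + L * ‖v - x‖ := add_le_add (hGf x hxX) (hlip v x)
  have hdnn : (0:ℝ) ≤ infDist v X := infDist_nonneg
  calc ‖p - v‖ ≤ ‖p - x‖ + ‖x - v‖ := norm_sub_le_norm_sub_add_norm_sub p x v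
    _ ≤ ‖u - x‖ + ‖v - x‖ := by rw [norm_sub_rev x v]; linarith
    _ ≤ 2 * ‖v - x‖ + α * ‖g v‖ := by linarith
    _ ≤ 2 * ‖v - x‖ + α * (Gf + L * ‖v - x‖) := by nlinarith
    _ = (2 + α * L) * infDist v X + α * Gf := by rw [hvx]; ring
end
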